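/- arXiv:1304.7044 — 8 statements merged into one kernel-verified Lean document; each statement's English description precedes it below -/
import Mathlib

section
/- Let m be a positive integer and F = 𝔽_{2^{3m}}. The function f : F → F defined by f(x) = x^{2^m+1} + x^{2^{2m}+2^m} is pseudo-planar on F if and only if for every ε ∈ F with ε ≠ 0 one has N₃(ε) + Tr₃(ε^{3} + ε^{1+2^{m+1}}) ≠ 0. -/
set_option maxHeartbeats 2000000 in
theorem aux_pseudoplanar {m : ℕ} (hm : 0 < m) {K : Type*} [Field K] [Fintype K] [CharP K 2]
    (hcard : Fintype.card K = 2 ^ (3 * m))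
    (f : K → K) (hf : ∀ x, f x = x ^ (2 ^ m + 1) + x ^ (2 ^ (2 * m) + 2 ^ m))
    (ε : K) (hε : ε ≠ 0) :
    Function.Bijective (fun x => f (x + ε) + f x + ε * x) ↔
      ε ^ (1 + 2 ^ m + 2 ^ (2 * m)) +
        (ε ^ 3 + ε ^ (1 + 2 ^ (m + 1)) + (ε ^ 3 + ε ^ (1 + 2 ^ (m + 1))) ^ 2 ^ m
          + (ε ^ 3 + ε ^ (1 + 2 ^ (m + 1))) ^ 2 ^ (2 * m)) ≠ 0 := by
  have h2 : (2 : K) = 0 := by exact_mod_cast CharP.cast_eq_zero K 2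
  have hadd : ∀ x y : K, (x + y) ^ 2 ^ m = x ^ 2 ^ m + y ^ 2 ^ m := fun x y =>
    add_pow_char_pow x y 2 m
  have h2m : (2:ℕ) ^ (2 * m) = 2 ^ m * 2 ^ m := by rw [two_mul, pow_add]
  have hqq : ∀ y : K, y ^ 2 ^ (2 * m) = (y ^ 2 ^ m) ^ 2 ^ m := fun y => by
    rw [h2m, pow_mul]
  have hfix : ∀ x : K, ((x ^ 2 ^ m) ^ 2 ^ m) ^ 2 ^ m = x := by
    intro x
    have h3 : (2:ℕ) ^ m * (2 ^ m * 2 ^ m) = 2 ^ (3 * m) := by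
      rw [← pow_add, ← pow_add]; congr 1; omega
    rw [← pow_mul, ← pow_mul, h3, ← hcard, FiniteField.pow_card]
  have hpow2 : ∀ y : K, (y ^ 2) ^ 2 ^ m = (y ^ 2 ^ m) ^ 2 := fun y => by
    rw [← pow_mul, mul_comm, pow_mul]
  have hpow3 : ∀ y : K, (y ^ 3) ^ 2 ^ m = (y ^ 2 ^ m) ^ 3 := fun y => by
    rw [← pow_mul, mul_comm, pow_mul]
  have hLexp : ∀ x : K, f (x + ε) + f x + ε * x =
      (ε ^ 2 ^ m * ((x ^ 2 ^ m) ^ 2 ^ m) + (ε + (ε ^ 2 ^ m) ^ 2 ^ m) * x ^ 2 ^ m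
        + (ε + ε ^ 2 ^ m) * x)
      + (ε ^ 2 ^ m * ε + (ε ^ 2 ^ m) ^ 2 ^ m * ε ^ 2 ^ m) := by
    intro x
    have p1 : ∀ y : K, y ^ (2 ^ m + 1) = y ^ 2 ^ m * y := fun y => by
      rw [pow_add, pow_one]
    have p2 : ∀ y : K, y ^ (2 ^ (2 * m) + 2 ^ m) = (y ^ 2 ^ m) ^ 2 ^ m * y ^ 2 ^ m :=
      fun y => by rw [pow_add, hqq]
    rw [hf, hf]
    simp only [p1, p2, hadd]
    linear_combination (x ^ 2 ^ m * x + (x ^ 2 ^ m) ^ 2 ^ m * x ^ 2 ^ m) * h2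
  have hE1 : ∀ x : K,
      (ε ^ 2 ^ m * ((x ^ 2 ^ m) ^ 2 ^ m) + (ε + (ε ^ 2 ^ m) ^ 2 ^ m) * x ^ 2 ^ m
        + (ε + ε ^ 2 ^ m) * x) ^ 2 ^ m
      = (ε ^ 2 ^ m) ^ 2 ^ m * x + (ε ^ 2 ^ m + (ε ^ 2 ^ m) ^ 2 ^ m) * x ^ 2 ^ m
        + (ε ^ 2 ^ m + ε) * ((x ^ 2 ^ m) ^ 2 ^ m) := by
    intro x
    simp only [hadd, mul_pow, hfix]
    ring
  have hE2 : ∀ x : K,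
      ((ε ^ 2 ^ m * ((x ^ 2 ^ m) ^ 2 ^ m) + (ε + (ε ^ 2 ^ m) ^ 2 ^ m) * x ^ 2 ^ m
        + (ε + ε ^ 2 ^ m) * x) ^ 2 ^ m) ^ 2 ^ m
      = (ε ^ 2 ^ m + (ε ^ 2 ^ m) ^ 2 ^ m) * x + ε * x ^ 2 ^ m
        + ((ε ^ 2 ^ m) ^ 2 ^ m + ε) * ((x ^ 2 ^ m) ^ 2 ^ m) := by
    intro x
    rw [hE1]
    simp only [hadd, mul_pow, hfix]
    ring
  have key : ∀ x : K,
      ((ε ^ 2 ^ m + (ε ^ 2 ^ m) ^ 2 ^ m) * ((ε ^ 2 ^ m) ^ 2 ^ m + ε)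
          + (ε ^ 2 ^ m + ε) * ε)
        * (ε ^ 2 ^ m * ((x ^ 2 ^ m) ^ 2 ^ m) + (ε + (ε ^ 2 ^ m) ^ 2 ^ m) * x ^ 2 ^ m
            + (ε + ε ^ 2 ^ m) * x)
      + ((ε + (ε ^ 2 ^ m) ^ 2 ^ m) ^ 2 + ε * ε ^ 2 ^ m)
        * ((ε ^ 2 ^ m * ((x ^ 2 ^ m) ^ 2 ^ m) + (ε + (ε ^ 2 ^ m) ^ 2 ^ m) * x ^ 2 ^ m
            + (ε + ε ^ 2 ^ m) * x) ^ 2 ^ m)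
      + ((ε + (ε ^ 2 ^ m) ^ 2 ^ m) * (ε + ε ^ 2 ^ m)
          + ε ^ 2 ^ m * (ε ^ 2 ^ m + (ε ^ 2 ^ m) ^ 2 ^ m))
        * (((ε ^ 2 ^ m * ((x ^ 2 ^ m) ^ 2 ^ m) + (ε + (ε ^ 2 ^ m) ^ 2 ^ m) * x ^ 2 ^ m
            + (ε + ε ^ 2 ^ m) * x) ^ 2 ^ m) ^ 2 ^ m)
      = (ε * ε ^ 2 ^ m * (ε ^ 2 ^ m) ^ 2 ^ m + (ε ^ 3 + ε * (ε ^ 2 ^ m) ^ 2)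
          + ((ε ^ 2 ^ m) ^ 3 + ε ^ 2 ^ m * ((ε ^ 2 ^ m) ^ 2 ^ m) ^ 2)
          + (((ε ^ 2 ^ m) ^ 2 ^ m) ^ 3 + (ε ^ 2 ^ m) ^ 2 ^ m * ε ^ 2)) * x := by
    intro x
    rw [hE2 x, hE1 x]
    linear_combination
      (((ε ^ 2 ^ m) ^ 2 ^ m) ^ 3 * x ^ 2 ^ m
        + 2 * ε ^ 2 ^ m * ((ε ^ 2 ^ m) ^ 2 ^ m) ^ 2 * ((x ^ 2 ^ m) ^ 2 ^ m)
        + ε ^ 2 ^ m * ((ε ^ 2 ^ m) ^ 2 ^ m) ^ 2 * x ^ 2 ^ m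
        + ε ^ 2 ^ m * ((ε ^ 2 ^ m) ^ 2 ^ m) ^ 2 * x
        + (ε ^ 2 ^ m) ^ 2 * (ε ^ 2 ^ m) ^ 2 ^ m * ((x ^ 2 ^ m) ^ 2 ^ m)
        + 2 * (ε ^ 2 ^ m) ^ 2 * (ε ^ 2 ^ m) ^ 2 ^ m * x
        + ε * ((ε ^ 2 ^ m) ^ 2 ^ m) ^ 2 * ((x ^ 2 ^ m) ^ 2 ^ m)
        + 2 * ε * ((ε ^ 2 ^ m) ^ 2 ^ m) ^ 2 * x ^ 2 ^ m
        + 2 * ε * ((ε ^ 2 ^ m) ^ 2 ^ m) ^ 2 * x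
        + 3 * ε * ε ^ 2 ^ m * (ε ^ 2 ^ m) ^ 2 ^ m * ((x ^ 2 ^ m) ^ 2 ^ m)
        + 4 * ε * ε ^ 2 ^ m * (ε ^ 2 ^ m) ^ 2 ^ m * x ^ 2 ^ m
        + 2 * ε * ε ^ 2 ^ m * (ε ^ 2 ^ m) ^ 2 ^ m * x
        + 2 * ε * (ε ^ 2 ^ m) ^ 2 * ((x ^ 2 ^ m) ^ 2 ^ m)
        + ε * (ε ^ 2 ^ m) ^ 2 * x ^ 2 ^ m
        + ε * (ε ^ 2 ^ m) ^ 2 * x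
        + 2 * ε ^ 2 * (ε ^ 2 ^ m) ^ 2 ^ m * ((x ^ 2 ^ m) ^ 2 ^ m)
        + 2 * ε ^ 2 * (ε ^ 2 ^ m) ^ 2 ^ m * x ^ 2 ^ m
        + ε ^ 2 * (ε ^ 2 ^ m) ^ 2 ^ m * x
        + 2 * ε ^ 2 * ε ^ 2 ^ m * ((x ^ 2 ^ m) ^ 2 ^ m)
        + 2 * ε ^ 2 * ε ^ 2 ^ m * x ^ 2 ^ m
        + 2 * ε ^ 2 * ε ^ 2 ^ m * x
        + ε ^ 3 * ((x ^ 2 ^ m) ^ 2 ^ m)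
        + ε ^ 3 * x ^ 2 ^ m) * h2
  have comp : ∀ x : K,
      ε ^ 2 ^ m * ((ε ^ 2 ^ m * ((x ^ 2 ^ m) ^ 2 ^ m) + (ε + (ε ^ 2 ^ m) ^ 2 ^ m) * x ^ 2 ^ m
          + (ε + ε ^ 2 ^ m) * x) ^ 2 ^ m)
      + (ε + ε ^ 2 ^ m) * (ε ^ 2 ^ m * ((x ^ 2 ^ m) ^ 2 ^ m)
          + (ε + (ε ^ 2 ^ m) ^ 2 ^ m) * x ^ 2 ^ m + (ε + ε ^ 2 ^ m) * x)
      = ((ε ^ 2 ^ m + ε) ^ 2 + ε ^ 2 ^ m * (ε ^ 2 ^ m) ^ 2 ^ m) * x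
        + ((ε + (ε ^ 2 ^ m) ^ 2 ^ m) * (ε + ε ^ 2 ^ m)
            + ε ^ 2 ^ m * (ε ^ 2 ^ m + (ε ^ 2 ^ m) ^ 2 ^ m)) * x ^ 2 ^ m := by
    intro x
    rw [hE1]
    linear_combination (ε ^ 2 ^ m * (ε ^ 2 ^ m + ε) * ((x ^ 2 ^ m) ^ 2 ^ m)) * h2
  have hphiA1 : ((ε + (ε ^ 2 ^ m) ^ 2 ^ m) ^ 2 + ε * ε ^ 2 ^ m) ^ 2 ^ m
      = (ε ^ 2 ^ m + ε) ^ 2 + ε ^ 2 ^ m * (ε ^ 2 ^ m) ^ 2 ^ m := by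
    simp only [hadd, mul_pow, hpow2, hfix]
  have hΔ : ε ^ (1 + 2 ^ m + 2 ^ (2 * m)) +
      (ε ^ 3 + ε ^ (1 + 2 ^ (m + 1)) + (ε ^ 3 + ε ^ (1 + 2 ^ (m + 1))) ^ 2 ^ m
        + (ε ^ 3 + ε ^ (1 + 2 ^ (m + 1))) ^ 2 ^ (2 * m))
      = ε * ε ^ 2 ^ m * (ε ^ 2 ^ m) ^ 2 ^ m + (ε ^ 3 + ε * (ε ^ 2 ^ m) ^ 2)
          + ((ε ^ 2 ^ m) ^ 3 + ε ^ 2 ^ m * ((ε ^ 2 ^ m) ^ 2 ^ m) ^ 2)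
          + (((ε ^ 2 ^ m) ^ 2 ^ m) ^ 3 + (ε ^ 2 ^ m) ^ 2 ^ m * ε ^ 2) := by
    have h1 : ε ^ (1 + 2 ^ m + 2 ^ (2 * m)) = ε * ε ^ 2 ^ m * (ε ^ 2 ^ m) ^ 2 ^ m := by
      rw [pow_add, pow_add, pow_one, hqq]
    have h3 : ε ^ (1 + 2 ^ (m + 1)) = ε * (ε ^ 2 ^ m) ^ 2 := by
      rw [pow_add, pow_one, pow_succ, pow_mul]
    rw [h1, h3, hqq]
    simp only [hadd, mul_pow, hpow3, hpow2, hfix]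
    ring
  rw [ne_eq, hΔ, ← ne_eq]
  constructor
  · intro hbij hzero
    have hsur : ∀ y : K, ∃ x,
        ε ^ 2 ^ m * ((x ^ 2 ^ m) ^ 2 ^ m) + (ε + (ε ^ 2 ^ m) ^ 2 ^ m) * x ^ 2 ^ m
          + (ε + ε ^ 2 ^ m) * x = y := by
      intro y
      obtain ⟨x, hx⟩ := hbij.2 (y + (ε ^ 2 ^ m * ε + (ε ^ 2 ^ m) ^ 2 ^ m * ε ^ 2 ^ m))
      refine ⟨x, ?_⟩
      have hx' : f (x + ε) + f x + ε * x
          = y + (ε ^ 2 ^ m * ε + (ε ^ 2 ^ m) ^ 2 ^ m * ε ^ 2 ^ m) := hx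
      rw [hLexp] at hx'
      exact add_right_cancel hx'
    have hM : ∀ y : K,
        ((ε ^ 2 ^ m + (ε ^ 2 ^ m) ^ 2 ^ m) * ((ε ^ 2 ^ m) ^ 2 ^ m + ε)
            + (ε ^ 2 ^ m + ε) * ε) * y
        + ((ε + (ε ^ 2 ^ m) ^ 2 ^ m) ^ 2 + ε * ε ^ 2 ^ m) * y ^ 2 ^ m
        + ((ε + (ε ^ 2 ^ m) ^ 2 ^ m) * (ε + ε ^ 2 ^ m)
            + ε ^ 2 ^ m * (ε ^ 2 ^ m + (ε ^ 2 ^ m) ^ 2 ^ m)) * ((y ^ 2 ^ m) ^ 2 ^ m)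
        = 0 := by
      intro y
      obtain ⟨x, hx⟩ := hsur y
      rw [← hx, key x, hzero, zero_mul]
    have hlt1 : (1:ℕ) < 2 ^ m := by
      calc (1:ℕ) = 2 ^ 0 := rfl
        _ < 2 ^ m := Nat.pow_lt_pow_right (by norm_num) (by omega)
    have hlt2 : (2:ℕ) ^ m < 2 ^ (2 * m) := Nat.pow_lt_pow_right (by norm_num) (by omega)
    have hlt3 : (2:ℕ) ^ (2 * m) < 2 ^ (3 * m) := Nat.pow_lt_pow_right (by norm_num) (by omega)
    set A0e : K := (ε ^ 2 ^ m + (ε ^ 2 ^ m) ^ 2 ^ m) * ((ε ^ 2 ^ m) ^ 2 ^ m + ε)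
        + (ε ^ 2 ^ m + ε) * ε with hA0def
    set A1e : K := (ε + (ε ^ 2 ^ m) ^ 2 ^ m) ^ 2 + ε * ε ^ 2 ^ m with hA1def
    set A2e : K := (ε + (ε ^ 2 ^ m) ^ 2 ^ m) * (ε + ε ^ 2 ^ m)
        + ε ^ 2 ^ m * (ε ^ 2 ^ m + (ε ^ 2 ^ m) ^ 2 ^ m) with hA2def
    set p : Polynomial K := Polynomial.C A0e * Polynomial.X
        + Polynomial.C A1e * Polynomial.X ^ 2 ^ m
        + Polynomial.C A2e * Polynomial.X ^ 2 ^ (2 * m) with hp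
    have heval : ∀ y : K, p.eval y = 0 := by
      intro y
      rw [hp]
      simp only [Polynomial.eval_add, Polynomial.eval_mul, Polynomial.eval_pow,
        Polynomial.eval_C, Polynomial.eval_X]
      rw [hqq]
      exact hM y
    have hdeg : p.natDegree < Fintype.card K := by
      rw [hcard]
      refine lt_of_le_of_lt ?_ hlt3
      rw [hp]
      refine le_trans (Polynomial.natDegree_add_le _ _) (max_le ?_ ?_)
      · refine le_trans (Polynomial.natDegree_add_le _ _) (max_le ?_ ?_)
        · refine le_trans (Polynomial.natDegree_C_mul_le _ _) ?_
          rw [Polynomial.natDegree_X]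
          exact le_of_lt (hlt1.trans hlt2)
        · refine le_trans (Polynomial.natDegree_C_mul_le _ _) ?_
          rw [Polynomial.natDegree_X_pow]
          exact le_of_lt hlt2
      · refine le_trans (Polynomial.natDegree_C_mul_le _ _) ?_
        rw [Polynomial.natDegree_X_pow]
    have hp0 : p = 0 :=
      Polynomial.eq_zero_of_natDegree_lt_card_of_eval_eq_zero' p Finset.univ
        (fun i _ => heval i) (by rwa [Finset.card_univ])
    have hA1 : A1e = 0 := by
      have hc := congrArg (fun q => Polynomial.coeff q (2 ^ m)) hp0
      simp only [hp, Polynomial.coeff_add, Polynomial.coeff_C_mul, Polynomial.coeff_X,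
        Polynomial.coeff_X_pow, Polynomial.coeff_zero] at hc
      rw [if_neg hlt1.ne, if_neg hlt2.ne] at hc
      simpa using hc
    have hA2 : A2e = 0 := by
      have hc := congrArg (fun q => Polynomial.coeff q (2 ^ (2 * m))) hp0
      simp only [hp, Polynomial.coeff_add, Polynomial.coeff_C_mul, Polynomial.coeff_X,
        Polynomial.coeff_X_pow, Polynomial.coeff_zero] at hc
      rw [if_neg (hlt1.trans hlt2).ne, if_neg hlt2.ne'] at hc
      simpa using hc
    obtain ⟨x₁, hx₁⟩ := hsur 1
    have hc := comp x₁
    rw [hx₁] at hc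
    have hφ0 : (ε ^ 2 ^ m + ε) ^ 2 + ε ^ 2 ^ m * (ε ^ 2 ^ m) ^ 2 ^ m = 0 := by
      rw [← hphiA1, hA1]
      exact zero_pow (by positivity)
    rw [hφ0, hA2, zero_mul, zero_mul, add_zero] at hc
    simp only [one_pow, mul_one] at hc
    exact hε (by linear_combination hc - ε ^ 2 ^ m * h2)
  · intro hne
    have hinj : Function.Injective (fun x => f (x + ε) + f x + ε * x) := by
      intro x y hxy
      have hxy' : f (x + ε) + f x + ε * x = f (y + ε) + f y + ε * y := hxy
      rw [hLexp x, hLexp y] at hxy'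
      have hL : ε ^ 2 ^ m * ((x ^ 2 ^ m) ^ 2 ^ m) + (ε + (ε ^ 2 ^ m) ^ 2 ^ m) * x ^ 2 ^ m
          + (ε + ε ^ 2 ^ m) * x
          = ε ^ 2 ^ m * ((y ^ 2 ^ m) ^ 2 ^ m) + (ε + (ε ^ 2 ^ m) ^ 2 ^ m) * y ^ 2 ^ m
          + (ε + ε ^ 2 ^ m) * y := add_right_cancel hxy'
      have k1 := key x
      rw [hL] at k1
      have k2 := key y
      exact mul_left_cancel₀ hne (k1.symm.trans k2)
    exact Finite.injective_iff_bijective.mp hinj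

/-- The function `f(x) = x^(2^m+1) + x^(2^(2m)+2^m)` on `F = 𝔽_{2^(3m)}` is pseudo-planar
if and only if `N₃(ε) + Tr₃(ε³ + ε^(1+2^(m+1))) ≠ 0` for every `ε ≠ 0`, where
`Tr₃(x) = x + x^(2^m) + x^(2^(2m))` and `N₃(x) = x^(1+2^m+2^(2m))`. -/
theorem pseudoPlanar_iff_norm_trace_condition₁
    (m : ℕ) (hm : 0 < m)
    (Tr₃ N₃ : GaloisField 2 (3 * m) → GaloisField 2 (3 * m))
    (hTr : ∀ x, Tr₃ x = x + x ^ 2 ^ m + x ^ 2 ^ (2 * m))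
    (hN : ∀ x, N₃ x = x ^ (1 + 2 ^ m + 2 ^ (2 * m)))
    (f : GaloisField 2 (3 * m) → GaloisField 2 (3 * m))
    (hf : ∀ x, f x = x ^ (2 ^ m + 1) + x ^ (2 ^ (2 * m) + 2 ^ m)) :
    (∀ ε : GaloisField 2 (3 * m), ε ≠ 0 →
        Function.Bijective (fun x => f (x + ε) + f x + ε * x)) ↔
    (∀ ε : GaloisField 2 (3 * m), ε ≠ 0 →
        N₃ ε + Tr₃ (ε ^ 3 + ε ^ (1 + 2 ^ (m + 1))) ≠ 0) := by
  haveI : Fintype (GaloisField 2 (3 * m)) := Fintype.ofFinite _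
  have hcard : Fintype.card (GaloisField 2 (3 * m)) = 2 ^ (3 * m) := by
    rw [← Nat.card_eq_fintype_card]
    exact GaloisField.card 2 (3 * m) (by omega)
  have hpoint : ∀ ε : GaloisField 2 (3 * m), ε ≠ 0 →
      (Function.Bijective (fun x => f (x + ε) + f x + ε * x) ↔
        N₃ ε + Tr₃ (ε ^ 3 + ε ^ (1 + 2 ^ (m + 1))) ≠ 0) := by
    intro ε hε
    rw [hN, hTr]
    exact aux_pseudoplanar hm hcard f hf ε hε
  exact ⟨fun h ε hε => (hpoint ε hε).mp (h ε hε),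
    fun h ε hε => (hpoint ε hε).mpr (h ε hε)⟩
end

section
/- Let m be a positive integer with m ≢ 2 (mod 3), and let F = 𝔽_{2^{3m}}. Then the function f : F → F defined by f(x) = x^{2^m+1} + x^{2^{2m}+2^m} is pseudo-planar on F. -/
section Aux

variable {K : Type*} [Field K]

/-- If `w^3 = w + 1` in a field of characteristic two, and a ring endomorphism `φ`
satisfying `φ³ = id` on `a` acts on `w` as `w ↦ w` or `w ↦ w²`, then the linear relation
`a + w·φa + (w²+w+1)·φ²a = 0` forces `a = 0`. -/
private lemma auxCase (htwo : (2 : K) = 0) (φ : K →+* K) (a w : K)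
    (hφ3a : φ (φ (φ a)) = a) (hw : w ^ 3 = w + 1) (hφw : φ w = w ∨ φ w = w ^ 2)
    (hrel : a + w * φ a + (w ^ 2 + w + 1) * φ (φ a) = 0) : a = 0 := by
  have hwne : w + 1 ≠ 0 := by
    intro h
    have h10 : (1 : K) = 0 := by linear_combination (w ^ 2 - w + 1) * h - hw - h
    exact one_ne_zero h10
  have h2 := congrArg φ hrel
  simp only [map_add, map_mul, map_pow, map_one, map_zero, hφ3a] at h2
  rcases hφw with hcw | hcw
  · rw [hcw] at h2
    have h3 := congrArg φ h2
    simp only [map_add, map_mul, map_pow, map_one, map_zero, hφ3a, hcw] at h3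
    have key : (w + 1) ^ 2 * a = 0 := by
      linear_combination w ^ 2 * hrel + h2 + (w + 1) * h3 +
        ((-2) * φ a + (-1) * φ (φ a) * w + (-1) * φ (φ a)) * hw +
        ((-1) * a * w ^ 2 + (-1) * φ a * w ^ 2 + (-2) * φ a * w + (-2) * φ a +
          (-1) * φ (φ a) * w ^ 2 + (-2) * φ (φ a) * w + (-1) * φ (φ a)) * htwo
    rcases mul_eq_zero.mp key with h | h
    · exact absurd ((pow_eq_zero_iff (two_ne_zero)).mp h) hwne
    · exact h
  · rw [hcw] at h2
    have h3 := congrArg φ h2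
    simp only [map_add, map_mul, map_pow, map_one, map_zero, hφ3a, hcw] at h3
    have key : a = 0 := by
      linear_combination (w + 1) * hrel + w ^ 2 * h2 + w ^ 2 * h3 +
        ((-2) * a * w ^ 3 + (-3) * a * w + (-2) * a + (-1) * φ a * w ^ 7 +
          (-1) * φ a * w ^ 5 + (-1) * φ a * w ^ 4 + (-2) * φ a * w ^ 3 +
          (-2) * φ a * w ^ 2 + (-3) * φ a * w + (-4) * φ a + (-1) * φ (φ a) * w +
          (-1) * φ (φ a)) * hw +
        ((-2) * a * w ^ 2 + (-3) * a * w + (-1) * a + (-4) * φ a * w ^ 2 +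
          (-4) * φ a * w + (-2) * φ a + (-2) * φ (φ a) * w ^ 2 + (-2) * φ (φ a) * w +
          (-1) * φ (φ a)) * htwo
    exact key

/-- In characteristic two, if `y^3 = y + 1` then `y ^ 2^m = y ^ 2^(m % 3)`. -/
private lemma auxFrob (htwo : (2 : K) = 0) (m : ℕ) (y : K) (hy : y ^ 3 = y + 1) :
    y ^ 2 ^ m = y ^ 2 ^ (m % 3) := by
  have h8 : y ^ 8 = y := by
    linear_combination (y ^ 5 + y ^ 3 + y ^ 2 + y + 2) * hy + (y ^ 2 + y + 1) * htwo
  have h8k : ∀ k : ℕ, y ^ 8 ^ k = y := by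
    intro k
    induction k with
    | zero => simp
    | succ n ih => rw [pow_succ, pow_mul, ih, h8]
  have hm : 2 ^ m = 8 ^ (m / 3) * 2 ^ (m % 3) := by
    rw [show (8 : ℕ) = 2 ^ 3 by norm_num, ← pow_mul, ← pow_add]
    congr 1
    omega
  rw [hm, pow_mul, h8k]

/-- A finite field whose unit group has order divisible by 7 (characteristic two)
contains a root of `X³ + X + 1`. -/
private lemma auxRoot (htwo : (2 : K) = 0) [Finite K] (hdvd : 7 ∣ Nat.card Kˣ) :
    ∃ y : K, y ^ 3 = y + 1 := by
  haveI : Fact (Nat.Prime 7) := ⟨by norm_num⟩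
  obtain ⟨g, hg⟩ := exists_prime_orderOf_dvd_card' (G := Kˣ) 7 hdvd
  have h7 : (g : K) ^ 7 = 1 := by
    have h := pow_orderOf_eq_one g
    rw [hg] at h
    have h2 : ((g ^ 7 : Kˣ) : K) = ((1 : Kˣ) : K) := congrArg Units.val h
    simpa using h2
  have hne : (g : K) ≠ 1 := by
    intro h
    have hg1 : g = 1 := Units.ext (by rw [h, Units.val_one])
    rw [hg1, orderOf_one] at hg
    norm_num at hg
  set u : K := (g : K) with hu
  have hfac : (u - 1) * (u ^ 6 + u ^ 5 + u ^ 4 + u ^ 3 + u ^ 2 + u + 1) = 0 := by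
    linear_combination h7
  have hS : u ^ 6 + u ^ 5 + u ^ 4 + u ^ 3 + u ^ 2 + u + 1 = 0 := by
    rcases mul_eq_zero.mp hfac with h | h
    · exact absurd (by linear_combination h) hne
    · exact h
  have hprod : (u ^ 3 + u + 1) * (u ^ 3 + u ^ 2 + 1) = 0 := by
    linear_combination hS + u ^ 3 * htwo
  rcases mul_eq_zero.mp hprod with h | h
  · exact ⟨u, by linear_combination h - (u + 1) * htwo⟩
  · refine ⟨u ^ 6, ?_⟩
    linear_combination (u ^ 15 + (-1) * u ^ 14 + u ^ 13 + (-2) * u ^ 12 + 3 * u ^ 11 +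
      (-4) * u ^ 10 + 6 * u ^ 9 + (-9) * u ^ 8 + 13 * u ^ 7 + (-19) * u ^ 6 + 28 * u ^ 5 +
      (-41) * u ^ 4 + 59 * u ^ 3 + (-87) * u ^ 2 + 128 * u + (-187)) * h +
      (137 * u ^ 2 + (-64) * u + 93) * htwo

/-- The core kernel computation: in characteristic two, with `φ = (·)^(2^m)` satisfying
`φ³ = id`, if the linearized polynomial attached to the pseudo-planarity of
`x^(2^m+1) + x^(2^(2m)+2^m)` has `u` in its kernel, and `m % 3 ≠ 2`, then `u = 0`. -/
private lemma auxMain (m : ℕ) (hm3 : m % 3 ≠ 2) (htwo : (2 : K) = 0)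
    (φ : K →+* K) (hφdef : ∀ z : K, φ z = z ^ 2 ^ m) (hφ3 : ∀ z : K, φ (φ (φ z)) = z)
    (hroot : ∃ y : K, y ^ 3 = y + 1)
    (a u : K) (ha : a ≠ 0)
    (h1 : φ a * φ (φ u) + (a + φ (φ a)) * φ u + (a + φ a) * u = 0) : u = 0 := by
  by_contra hu
  have h2 : φ (φ a) * u + (φ a + a) * φ (φ u) + (φ a + φ (φ a)) * φ u = 0 := by
    have h := congrArg φ h1
    simp only [map_add, map_mul, map_zero, hφ3] at h
    linear_combination h
  have hE1 : (a ^ 2 + φ a ^ 2 + a * φ a + a * φ (φ a)) * φ u =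
      (a ^ 2 + φ a ^ 2 + φ a * φ (φ a)) * u := by
    linear_combination (a + φ a) * h1 + φ a * h2 +
      ((-1) * a ^ 2 * u + (-1) * a * φ a * u + (-1) * a * φ a * φ (φ u) +
        (-1) * φ a ^ 2 * u + (-1) * φ a ^ 2 * φ (φ u) + (-1) * φ a * φ (φ a) * u +
        (-1) * φ a * φ (φ a) * φ u) * htwo
  have hE2 : (a ^ 2 + φ a ^ 2 + a * φ a + a * φ (φ a)) * φ (φ u) =
      (φ a ^ 2 + φ (φ a) ^ 2 + φ a * φ (φ a) + a * φ a) * u := by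
    linear_combination (φ a + φ (φ a)) * h1 + (a + φ (φ a)) * h2 +
      ((-1) * a * φ a * u + (-1) * a * φ a * φ u + (-1) * a * φ (φ a) * u +
        (-1) * a * φ (φ a) * φ u + (-1) * φ a ^ 2 * u + (-1) * φ a * φ (φ a) * u +
        (-1) * φ a * φ (φ a) * φ u + (-1) * φ a * φ (φ a) * φ (φ u) +
        (-1) * φ (φ a) ^ 2 * u + (-1) * φ (φ a) ^ 2 * φ u) * htwo
  have hE1s : (φ a ^ 2 + φ (φ a) ^ 2 + φ a * φ (φ a) + a * φ a) * φ (φ u) =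
      (φ a ^ 2 + φ (φ a) ^ 2 + φ (φ a) * a) * φ u := by
    have h := congrArg φ hE1
    simp only [map_add, map_mul, map_pow, map_zero, hφ3] at h
    linear_combination h
  have hkey : φ (φ a) * (a ^ 3 + φ a ^ 3 + φ (φ a) ^ 3 + a * φ a * φ (φ a) +
      a ^ 2 * φ (φ a) + a * φ a ^ 2 + φ a * φ (φ a) ^ 2) * u = 0 := by
    linear_combination (a * φ (φ a) + φ a ^ 2 + φ (φ a) ^ 2) * hE1 +
      (a ^ 2 + a * φ a + a * φ (φ a) + φ a ^ 2) * hE1s +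
      (a * φ a + φ a ^ 2 + φ a * φ (φ a) + φ (φ a) ^ 2) * hE2 +
      ((-1) * a ^ 3 * φ a * φ (φ u) + a ^ 3 * φ (φ a) * u + a ^ 2 * φ a ^ 2 * u +
        (-2) * a ^ 2 * φ a ^ 2 * φ (φ u) + (-2) * a ^ 2 * φ a * φ (φ a) * φ (φ u) +
        a ^ 2 * φ (φ a) ^ 2 * u + (-1) * a ^ 2 * φ (φ a) ^ 2 * φ (φ u) +
        a * φ a ^ 3 * u + (-2) * a * φ a ^ 3 * φ (φ u) +
        2 * a * φ a ^ 2 * φ (φ a) * u + (-2) * a * φ a ^ 2 * φ (φ a) * φ (φ u) +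
        2 * a * φ a * φ (φ a) ^ 2 * u + (-2) * a * φ a * φ (φ a) ^ 2 * φ (φ u) +
        (-1) * a * φ (φ a) ^ 3 * φ (φ u) + φ a ^ 4 * u + (-1) * φ a ^ 4 * φ (φ u) +
        2 * φ a ^ 3 * φ (φ a) * u + (-1) * φ a ^ 3 * φ (φ a) * φ (φ u) +
        2 * φ a ^ 2 * φ (φ a) ^ 2 * u + (-1) * φ a ^ 2 * φ (φ a) ^ 2 * φ (φ u) +
        2 * φ a * φ (φ a) ^ 3 * u + φ (φ a) ^ 4 * u) * htwo
  have hC : φ (φ a) ≠ 0 := by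
    intro h
    apply ha
    have h3a := hφ3 a
    rw [← h3a, h, map_zero]
  have hΔ : a ^ 3 + φ a ^ 3 + φ (φ a) ^ 3 + a * φ a * φ (φ a) + a ^ 2 * φ (φ a) +
      a * φ a ^ 2 + φ a * φ (φ a) ^ 2 = 0 := by
    rcases mul_eq_zero.mp hkey with h | h
    · rcases mul_eq_zero.mp h with h' | h'
      · exact absurd h' hC
      · exact h'
    · exact absurd h hu
  obtain ⟨y, hy⟩ := hroot
  have hφy : φ y = y ∨ φ y = y ^ 2 := by
    have hf := auxFrob htwo m y hy
    have hcase : m % 3 = 0 ∨ m % 3 = 1 := by omega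
    rcases hcase with h | h
    · left; rw [hφdef, hf, h, pow_zero, pow_one]
    · right; rw [hφdef, hf, h, pow_one]
  have hfac : (a + y * φ a + (y ^ 2 + y + 1) * φ (φ a)) *
      ((a + y ^ 2 * φ a + (y + 1) * φ (φ a)) *
        (a + (y ^ 2 + y) * φ a + (y ^ 2 + 1) * φ (φ a))) = 0 := by
    linear_combination hΔ +
      (a * φ a ^ 2 * y + 3 * a * φ a ^ 2 + 3 * a * φ a * φ (φ a) * y +
        5 * a * φ a * φ (φ a) + a * φ (φ a) ^ 2 * y + 3 * a * φ (φ a) ^ 2 +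
        φ a ^ 3 * y ^ 2 + φ a ^ 3 * y + φ a ^ 3 + φ a ^ 2 * φ (φ a) * y ^ 3 +
        3 * φ a ^ 2 * φ (φ a) * y ^ 2 + 4 * φ a ^ 2 * φ (φ a) * y +
        8 * φ a ^ 2 * φ (φ a) + φ a * φ (φ a) ^ 2 * y ^ 3 +
        2 * φ a * φ (φ a) ^ 2 * y ^ 2 + 7 * φ a * φ (φ a) ^ 2 * y +
        9 * φ a * φ (φ a) ^ 2 + φ (φ a) ^ 3 * y ^ 2 + 2 * φ (φ a) ^ 3 * y +
        4 * φ (φ a) ^ 3) * hy +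
      (a ^ 2 * φ a * y ^ 2 + a ^ 2 * φ a * y + a ^ 2 * φ (φ a) * y ^ 2 +
        a ^ 2 * φ (φ a) * y + a ^ 2 * φ (φ a) + a * φ a ^ 2 * y ^ 2 +
        2 * a * φ a ^ 2 * y + a * φ a ^ 2 + 5 * a * φ a * φ (φ a) * y ^ 2 +
        6 * a * φ a * φ (φ a) * y + 2 * a * φ a * φ (φ a) +
        3 * a * φ (φ a) ^ 2 * y ^ 2 + 4 * a * φ (φ a) ^ 2 * y + 3 * a * φ (φ a) ^ 2 +
        φ a ^ 3 * y ^ 2 + φ a ^ 3 * y + 4 * φ a ^ 2 * φ (φ a) * y ^ 2 +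
        6 * φ a ^ 2 * φ (φ a) * y + 4 * φ a ^ 2 * φ (φ a) +
        7 * φ a * φ (φ a) ^ 2 * y ^ 2 + 9 * φ a * φ (φ a) ^ 2 * y +
        4 * φ a * φ (φ a) ^ 2 + 3 * φ (φ a) ^ 3 * y ^ 2 + 4 * φ (φ a) ^ 3 * y +
        2 * φ (φ a) ^ 3) * htwo
  rcases mul_eq_zero.mp hfac with h | h
  · exact ha (auxCase htwo φ a y (hφ3 a) hy hφy h)
  rcases mul_eq_zero.mp h with h | h
  · have hw2 : (y ^ 2) ^ 3 = y ^ 2 + 1 := by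
      linear_combination (y ^ 3 + y + 1) * hy + y * htwo
    have hφw2 : φ (y ^ 2) = y ^ 2 ∨ φ (y ^ 2) = (y ^ 2) ^ 2 := by
      rcases hφy with h' | h'
      · left; rw [map_pow, h']
      · right; rw [map_pow, h']
    have hrel2 : a + y ^ 2 * φ a + ((y ^ 2) ^ 2 + y ^ 2 + 1) * φ (φ a) = 0 := by
      linear_combination h + (φ (φ a) * y) * hy + (φ (φ a) * y ^ 2) * htwo
    exact ha (auxCase htwo φ a (y ^ 2) (hφ3 a) hw2 hφw2 hrel2)
  · have hw3 : (y ^ 2 + y) ^ 3 = y ^ 2 + y + 1 := by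
      linear_combination (y ^ 3 + 3 * y ^ 2 + 4 * y + 5) * hy + (3 * y ^ 2 + 4 * y + 2) * htwo
    have hφw3 : φ (y ^ 2 + y) = y ^ 2 + y ∨ φ (y ^ 2 + y) = (y ^ 2 + y) ^ 2 := by
      rcases hφy with h' | h'
      · left; rw [map_add, map_pow, h']
      · right
        rw [map_add, map_pow, h']
        linear_combination (-(y ^ 3)) * htwo
    have hrel3 : a + (y ^ 2 + y) * φ a + ((y ^ 2 + y) ^ 2 + (y ^ 2 + y) + 1) * φ (φ a) = 0 := by
      linear_combination h + (φ (φ a) * y + 2 * φ (φ a)) * hy +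
        (φ (φ a) * y ^ 2 + 2 * φ (φ a) * y + φ (φ a)) * htwo
    exact ha (auxCase htwo φ a (y ^ 2 + y) (hφ3 a) hw3 hφw3 hrel3)

end Aux

/-- **Proposition.** Let `m` be a positive integer with `m ≢ 2 (mod 3)` and `F = 𝔽_{2^(3m)}`.
Then `f(x) = x^(2^m+1) + x^(2^(2m)+2^m)` is pseudo-planar on `F`, i.e. for every `ε ≠ 0`
the map `x ↦ f(x+ε) + f(x) + ε·x` is a bijection of `F`. -/
theorem pseudoPlanar_binomial_of_mod_three_ne_two
    (m : ℕ) (hm : 0 < m) (hm3 : m % 3 ≠ 2)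
    (f : GaloisField 2 (3 * m) → GaloisField 2 (3 * m))
    (hf : ∀ x, f x = x ^ (2 ^ m + 1) + x ^ (2 ^ (2 * m) + 2 ^ m)) :
    ∀ ε : GaloisField 2 (3 * m), ε ≠ 0 →
      Function.Bijective (fun x => f (x + ε) + f x + ε * x) := by
  intro ε hε
  have h3m : 3 * m ≠ 0 := by omega
  have htwo : (2 : GaloisField 2 (3 * m)) = 0 := by
    have h := CharP.cast_eq_zero (GaloisField 2 (3 * m)) 2
    exact_mod_cast h
  have hcard : ∀ z : GaloisField 2 (3 * m), z ^ 2 ^ (3 * m) = z := by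
    intro z
    haveI : Fintype (GaloisField 2 (3 * m)) := Fintype.ofFinite _
    have hc : Fintype.card (GaloisField 2 (3 * m)) = 2 ^ (3 * m) := by
      rw [← Nat.card_eq_fintype_card]
      exact GaloisField.card 2 (3 * m) h3m
    rw [← hc]
    exact FiniteField.pow_card z
  let φ : GaloisField 2 (3 * m) →+* GaloisField 2 (3 * m) :=
    { toFun := fun z => z ^ 2 ^ m
      map_one' := one_pow _
      map_mul' := fun x y => mul_pow x y _
      map_zero' := zero_pow (by positivity)
      map_add' := fun x y => add_pow_char_pow x y 2 m }
  have hφdef : ∀ z : GaloisField 2 (3 * m), φ z = z ^ 2 ^ m := fun _ => rfl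
  have hφ3 : ∀ z : GaloisField 2 (3 * m), φ (φ (φ z)) = z := by
    intro z
    show ((z ^ 2 ^ m) ^ 2 ^ m) ^ 2 ^ m = z
    rw [← pow_mul, ← pow_mul,
      show 2 ^ m * (2 ^ m * 2 ^ m) = 2 ^ (3 * m) by
        rw [← pow_add, ← pow_add]; congr 1; omega]
    exact hcard z
  have hroot : ∃ y : GaloisField 2 (3 * m), y ^ 3 = y + 1 := by
    apply auxRoot htwo
    have hcu : Nat.card (GaloisField 2 (3 * m))ˣ = 2 ^ (3 * m) - 1 := by
      rw [Nat.card_units, GaloisField.card 2 (3 * m) h3m]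
    rw [hcu, pow_mul]
    have hd := Nat.sub_dvd_pow_sub_pow (2 ^ 3) 1 m
    simpa using hd
  apply Finite.injective_iff_bijective.mp
  intro x1 x2 hg
  simp only [hf] at hg
  have hp1 : ∀ z : GaloisField 2 (3 * m), z ^ (2 ^ m + 1) = φ z * z := by
    intro z
    rw [pow_add, pow_one]
    rfl
  have hp2 : ∀ z : GaloisField 2 (3 * m), z ^ (2 ^ (2 * m) + 2 ^ m) = φ (φ z) * φ z := by
    intro z
    rw [pow_add, show 2 ^ (2 * m) = 2 ^ m * 2 ^ m by rw [two_mul, pow_add], pow_mul]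
    rfl
  simp only [hp1, hp2] at hg
  simp only [map_add] at hg
  have h1 : φ ε * φ (φ (x1 - x2)) + (ε + φ (φ ε)) * φ (x1 - x2) + (ε + φ ε) * (x1 - x2) = 0 := by
    simp only [map_sub]
    linear_combination hg +
      ((-1) * x1 * φ x1 + x2 * φ x2 + (-1) * φ x1 * φ (φ x1) + φ x2 * φ (φ x2)) * htwo
  have h0 := auxMain m hm3 htwo φ hφdef hφ3 hroot ε (x1 - x2) hε h1
  exact sub_eq_zero.mp h0
end

section
/- Let m be a positive integer with m ≢ 2 (mod 3), and let F = 𝔽_{2^{3m}}. Then for every ε ∈ F with ε ≠ 0 one has ε^{1+2^m+2^{2m}} + Tr₃(ε^{3} + ε^{1+2^{m+1}}) ≠ 0. -/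
set_option maxHeartbeats 1000000 in
set_option synthInstance.maxHeartbeats 400000 in
/-- Let `m` be a positive integer with `m ≢ 2 (mod 3)` and `F = 𝔽_{2^(3m)}`. Then for every
`ε ∈ F`, `ε ≠ 0`, one has `ε^(1+2^m+2^(2m)) + Tr₃(ε³ + ε^(1+2^(m+1))) ≠ 0`, where
`Tr₃(x) = x + x^(2^m) + x^(2^(2m))`. -/
theorem norm_add_trace_ne_zero_of_mod_three_ne_two
    (m : ℕ) (hm : 0 < m) (hm3 : m % 3 ≠ 2)
    (Tr₃ : GaloisField 2 (3 * m) → GaloisField 2 (3 * m))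
    (hTr : ∀ x, Tr₃ x = x + x ^ 2 ^ m + x ^ 2 ^ (2 * m)) :
    ∀ ε : GaloisField 2 (3 * m), ε ≠ 0 →
      ε ^ (1 + 2 ^ m + 2 ^ (2 * m)) + Tr₃ (ε ^ 3 + ε ^ (1 + 2 ^ (m + 1))) ≠ 0 := by
  intro ε hε hE0
  classical
  haveI : Fintype (GaloisField 2 (3 * m)) := Fintype.ofFinite _
  have hcard : Fintype.card (GaloisField 2 (3 * m)) = 2 ^ (3 * m) := by
    rw [← Nat.card_eq_fintype_card]; exact GaloisField.card 2 (3 * m) (by positivity)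
  have hone : (1 : GaloisField 2 (3 * m)) ≠ 0 := one_ne_zero
  have h2 : (2 : GaloisField 2 (3 * m)) = 0 := by
    have h := CharP.cast_eq_zero (GaloisField 2 (3 * m)) 2
    push_cast at h; exact h
  have hfr : ∀ x y : GaloisField 2 (3 * m), (x + y) ^ 2 ^ m = x ^ 2 ^ m + y ^ 2 ^ m :=
    fun x y => add_pow_char_pow x y 2 m
  -- element of order 7
  haveI : Fact (Nat.Prime 7) := ⟨by norm_num⟩
  have h7dvd : 7 ∣ Fintype.card (GaloisField 2 (3 * m))ˣ := by
    rw [Fintype.card_units, hcard, pow_mul]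
    have h := Nat.sub_dvd_pow_sub_pow 8 1 m
    norm_num at h ⊢
    exact h
  obtain ⟨uu, huu⟩ := exists_prime_orderOf_dvd_card 7 h7dvd
  have h7u : uu ^ 7 = 1 := by rw [← huu]; exact pow_orderOf_eq_one uu
  have h7 : (uu : GaloisField 2 (3 * m)) ^ 7 = 1 := by rw [← Units.val_pow_eq_pow_val, h7u, Units.val_one]
  have hu1 : (uu : GaloisField 2 (3 * m)) ≠ 1 := by
    intro h
    have : uu = 1 := Units.ext h
    rw [this, orderOf_one] at huu; norm_num at huu
  have hu0 : (uu : GaloisField 2 (3 * m)) ≠ 0 := Units.ne_zero uu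
  set v : GaloisField 2 (3 * m) := (uu : GaloisField 2 (3 * m)) with hv
  -- obtain root ω of x^3 = x + 1
  have hfac : (v + 1) * (v ^ 3 + v + 1) * (v ^ 3 + v ^ 2 + 1) = 0 := by
    linear_combination (1) * h7 + (1 + v + v^2 + 2*v^3 + 2*v^4 + v^5 + v^6) * h2
  have hv1 : v + 1 ≠ 0 := by
    intro h; exact hu1 (by linear_combination h - h2)
  obtain ⟨ω, hz⟩ : ∃ ω : GaloisField 2 (3 * m), ω ^ 3 = ω + 1 := by
    rcases mul_eq_zero.mp hfac with h | hu2
    · rcases mul_eq_zero.mp h with h | hu3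
      · exact absurd h hv1
      · exact ⟨v, by linear_combination hu3 + (- v - 1) * h2⟩
    · refine ⟨v ^ 6, ?_⟩
      linear_combination (v^4 + v^11) * h7 + (1 + v^2 - v^3) * hu2 + (- 1 - v^2) * h2
  have hz0 : ω ≠ 0 := by
    intro h; rw [h] at hz; simpa using hz.symm
  have h7z : ω ^ 7 = 1 := by
    linear_combination (1 + ω + ω^2 + ω^4) * hz + (ω + ω^2) * h2
  -- ω ^ 2^m ∈ {ω, ω^2}
  have hmod : 2 ^ m % 7 = 1 ∨ 2 ^ m % 7 = 2 := by
    rcases (show m % 3 = 0 ∨ m % 3 = 1 from by omega) with h | h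
    · left
      obtain ⟨k, hk⟩ : 3 ∣ m := Nat.dvd_of_mod_eq_zero h
      rw [hk, pow_mul, Nat.pow_mod]; norm_num
    · right
      obtain ⟨k, hk⟩ : ∃ k, m = 3 * k + 1 := ⟨m / 3, by omega⟩
      rw [hk, pow_add, pow_mul, pow_one, Nat.mul_mod, Nat.pow_mod]; norm_num
  have hpow : ω ^ 2 ^ m = ω ^ (2 ^ m % 7) := by
    conv_lhs => rw [← Nat.div_add_mod (2 ^ m) 7]
    rw [pow_add, pow_mul, h7z, one_pow, one_mul]
  have hzq : ω ^ 2 ^ m = ω ∨ ω ^ 2 ^ m = ω ^ 2 := by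
    rcases hmod with h | h
    · left; rw [hpow, h, pow_one]
    · right; rw [hpow, h]
  -- set up conjugates
  obtain ⟨B, hB⟩ : ∃ x, ε ^ 2 ^ m = x := ⟨_, rfl⟩
  obtain ⟨C, hC⟩ : ∃ x, B ^ 2 ^ m = x := ⟨_, rfl⟩
  have hC2 : ε ^ 2 ^ (2 * m) = C := by
    rw [← hC, ← hB, ← pow_mul, ← pow_add, two_mul]
  have hCA : C ^ 2 ^ m = ε := by
    rw [← hC2, ← pow_mul, ← pow_add]
    have h3m : 2 * m + m = 3 * m := by ring
    rw [h3m, ← hcard]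
    exact FiniteField.pow_card ε
  -- rewrite hE0 into polynomial form
  have hsplit : ∀ x : GaloisField 2 (3 * m), x ^ 2 ^ (2 * m) = (x ^ 2 ^ m) ^ 2 ^ m :=
    fun x => by rw [← pow_mul, ← pow_add, two_mul]
  have k1 : ε ^ (1 + 2 ^ m + 2 ^ (2 * m)) = ε * B * C := by
    rw [pow_add, pow_add, pow_one, hB, hC2]
  have k2 : ε ^ (1 + 2 ^ (m + 1)) = ε * B ^ 2 := by
    rw [pow_add, pow_one, pow_succ, pow_mul, hB]
  have k3 : (ε ^ 3 + ε * B ^ 2) ^ 2 ^ m = B ^ 3 + B * C ^ 2 := by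
    rw [hfr, mul_pow, pow_right_comm, pow_right_comm B, hB, hC]
  have k4 : (B ^ 3 + B * C ^ 2) ^ 2 ^ m = C ^ 3 + C * ε ^ 2 := by
    rw [hfr, mul_pow, pow_right_comm, pow_right_comm C, hC, hCA]
  rw [hTr, k2, hsplit (ε ^ 3 + ε * B ^ 2), k1, k3, k4] at hE0
  -- hE0 : ε*B*C + ((ε^3 + ε*B^2) + (B^3 + B*C^2) + (C^3 + C*ε^2)) = 0
  -- the main claim
  have claim : ∀ z : GaloisField 2 (3 * m), z ^ 3 = z + 1 →
      (z ^ 2 ^ m = z ∨ z ^ 2 ^ m = z ^ 2) →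
      ε + z * B + (z ^ 2 + z + 1) * C = 0 → False := by
    intro z hz hq h1
    have hz1 : z ≠ 1 := by
      intro h; rw [h] at hz
      exact hone (by linear_combination - hz)
    have e2 : B + z ^ 2 ^ m * C + ((z ^ 2 ^ m) ^ 2 + z ^ 2 ^ m + 1) * ε = 0 := by
      have e : (ε + z * B + (z ^ 2 + z + 1) * C) ^ 2 ^ m = 0 := by
        rw [h1]; exact zero_pow (by positivity)
      simp only [hfr, mul_pow, one_pow] at e
      rw [pow_right_comm z 2, hB, hC, hCA] at e
      linear_combination e
    rcases hq with hq | hq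
    · rw [hq] at e2
      have e3 : C + z * ε + (z ^ 2 + z + 1) * B = 0 := by
        have e : (B + z * C + (z ^ 2 + z + 1) * ε) ^ 2 ^ m = 0 := by
          rw [show B + z * C + (z ^ 2 + z + 1) * ε = 0 from by linear_combination e2]
          exact zero_pow (by positivity)
        simp only [hfr, mul_pow, one_pow] at e
        rw [pow_right_comm z 2, hq, hB, hC, hCA] at e
        linear_combination e
      have hdet : ε * (z + 1) ^ 2 = 0 := by
        linear_combination (1 - z - z^2 - z^3) * h1 + (1 + z + 3*z^2 + 2*z^3 + z^4) * e2 + (- 1 - z) * e3 + (- 9*ε - 7*z*ε - 3*z^2*ε - z^3*ε) * hz + (- 5*ε - 7*z*ε - 6*z^2*ε) * h2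
      rcases mul_eq_zero.mp hdet with h | h
      · exact hε h
      · have hz10 : z + 1 = 0 := sq_eq_zero_iff.mp h
        exact hz1 (by linear_combination hz10 - h2)
    · rw [hq] at e2
      have e2' : B + z ^ 2 * C + (z ^ 4 + z ^ 2 + 1) * ε = 0 := by linear_combination e2
      have e3 : C + z ^ 4 * ε + (z ^ 8 + z ^ 4 + 1) * B = 0 := by
        have e : (B + z ^ 2 * C + (z ^ 4 + z ^ 2 + 1) * ε) ^ 2 ^ m = 0 := by
          rw [show B + z ^ 2 * C + (z ^ 4 + z ^ 2 + 1) * ε = 0 from e2']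
          exact zero_pow (by positivity)
        simp only [hfr, mul_pow, one_pow] at e
        rw [pow_right_comm z 2, pow_right_comm z 4, hq, hB, hC, hCA] at e
        linear_combination e
      have : ε = 0 := by
        linear_combination (1 - z^2 - z^6 - z^10) * h1 + (1 + z^2 + z^4 + z^5 + z^6 + z^8 + z^9 + z^10) * e2' + (- 1 - z - z^2 + z^3) * e3 + (- 49*ε - 39*z*ε - 28*z^2*ε - 21*z^3*ε - 16*z^4*ε - 12*z^5*ε - 8*z^6*ε - 6*z^7*ε - 3*z^8*ε - 3*z^9*ε - z^10*ε - z^11*ε) * hz + (- 25*ε - 44*z*ε - 34*z^2*ε) * h2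
      exact hε this
  -- factorization
  have key : (ε + ω * B + (ω ^ 2 + ω + 1) * C) *
      (ε + ω ^ 2 * B + ((ω ^ 2) ^ 2 + ω ^ 2 + 1) * C) *
      (ε + ω ^ 4 * B + ((ω ^ 4) ^ 2 + ω ^ 4 + 1) * C) = 0 := by
    linear_combination (56*C^3 + 49*B*C^2 + 14*B^2*C + B^3 + 25*ε*C^2 + 15*ε*B*C + 3*ε*B^2 + 2*ε^2*C + 43*ω*C^3 + 36*ω*B*C^2 + 10*ω*B^2*C + ω*B^3 + 21*ω*ε*C^2 + 11*ω*ε*B*C + ω*ε*B^2 + 3*ω*ε^2*C + ω*ε^2*B + 31*ω^2*C^3 + 27*ω^2*B*C^2 + 8*ω^2*B^2*C + ω^2*B^3 + 13*ω^2*ε*C^2 + 7*ω^2*ε*B*C + ω^2*ε*B^2 + ω^2*ε^2*C + 24*ω^3*C^3 + 20*ω^3*B*C^2 + 5*ω^3*B^2*C + 11*ω^3*ε*C^2 + 6*ω^3*ε*B*C + ω^3*ε*B^2 + ω^3*ε^2*C + 16*ω^4*C^3 + 14*ω^4*B*C^2 + 5*ω^4*B^2*C + ω^4*B^3 + 5*ω^4*ε*C^2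 + 2*ω^4*ε*B*C + 13*ω^5*C^3 + 10*ω^5*B*C^2 + 2*ω^5*B^2*C + 6*ω^5*ε*C^2 + 2*ω^5*ε*B*C + ω^5*ε^2*C + 8*ω^6*C^3 + 7*ω^6*B*C^2 + 2*ω^6*B^2*C + 2*ω^6*ε*C^2 + ω^6*ε*B*C + 7*ω^7*C^3 + 4*ω^7*B*C^2 + 3*ω^7*ε*C^2 + ω^7*ε*B*C + 3*ω^8*C^3 + 3*ω^8*B*C^2 + ω^8*B^2*C + 3*ω^9*C^3 + ω^9*B*C^2 + ω^9*ε*C^2 + ω^10*C^3 + ω^10*B*C^2 + ω^11*C^3) * hz + (28*C^3 + 24*B*C^2 + 7*B^2*C + 14*ε*C^2 + 7*ε*B*C + ε*B^2 + 2*ε^2*C + 50*ω*C^3 + 43*ω*B*C^2 + 12*ω*B^2*C + ω*B^3 + 24*ω*ε*C^2 + 14*ω*ε*B*C + 2*ω*ε*B^2 + 3*ω*ε^2*C + ω*ε^2*B + 38*ω^2*C^3 + 32*ω^2*B*C^2 + 9*ω^2*B^2*C + ω^2*B^3 + 19*ω^2*ε*C^2 + 10*ω^2*ε*B*C + ω^2*ε*B^2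 + 3*ω^2*ε^2*C + ω^2*ε^2*B) * h2 + hE0
  rcases mul_eq_zero.mp key with h | h
  · rcases mul_eq_zero.mp h with h | h
    · exact claim ω hz hzq h
    · refine claim (ω ^ 2) (by linear_combination (1 + ω + ω^3) * hz + (ω) * h2) ?_ h
      rcases hzq with hq | hq
      · left; rw [pow_right_comm, hq]
      · right; rw [pow_right_comm, hq]
  · refine claim (ω ^ 4) (by linear_combination (5 + 3*ω + 3*ω^2 + 2*ω^3 + 2*ω^4 + ω^5 + ω^6 + ω^7 + ω^9) * hz + (2 + 4*ω + 3*ω^2) * h2) ?_ h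
    rcases hzq with hq | hq
    · left; rw [pow_right_comm, hq]
    · right; rw [pow_right_comm, hq]; ring
end

section
/- Let m be a positive integer with m ≡ 2 (mod 3), and let F = 𝔽_{2^{3m}}. Then the function f : F → F defined by f(x) = x^{2^m+1} + x^{2^{2m}+2^m} is NOT pseudo-planar on F. More precisely, there exists ε ∈ F with ε^{3} + ε^{2} + 1 = 0, and for any such ε one has N₃(ε) + Tr₃(ε^{3} + ε^{1+2^{m+1}}) = 0. -/
section Aux

variable {K : Type*} [Field K]

/-- If `ε ^ 7 = 1` then powers of `ε` only depend on the exponent mod 7. -/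
lemma aux_pow_mod_seven (ε : K) (h7 : ε ^ 7 = 1) (a b : ℕ) (hab : a % 7 = b % 7) :
    ε ^ a = ε ^ b := by
  have key : ∀ c : ℕ, ε ^ c = ε ^ (c % 7) := by
    intro c
    conv_lhs => rw [← Nat.div_add_mod c 7]
    rw [pow_add, pow_mul, h7, one_pow, one_mul]
  rw [key a, key b, hab]

lemma aux_two_pow_mod (n r : ℕ) (h : n % 3 = r) : 2 ^ n % 7 = 2 ^ r % 7 := by
  conv_lhs => rw [← Nat.div_add_mod n 3, h]
  rw [pow_add, pow_mul, Nat.mul_mod, Nat.pow_mod]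
  norm_num

/-- Existence of a root of `X^3 + X^2 + 1` in a finite field of order `2 ^ (3*m)`. -/
lemma aux_exists_root (m : ℕ) (hm : 0 < m) :
    ∃ ε : GaloisField 2 (3 * m), ε ^ 3 + ε ^ 2 + 1 = 0 := by
  set K := GaloisField 2 (3 * m) with hK
  have h2 : (2 : K) = 0 := by
    have := CharP.cast_eq_zero K 2
    exact_mod_cast this
  have hcard : Nat.card K = 2 ^ (3 * m) := GaloisField.card 2 (3 * m) (by positivity)
  have hdvd : 7 ∣ Nat.card Kˣ := by
    rw [Nat.card_units, hcard]
    have h8 : (7 : ℕ) ∣ 8 ^ m - 1 ^ m := Nat.sub_dvd_pow_sub_pow 8 1 m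
    simpa [pow_mul, one_pow] using h8
  haveI : Fact (Nat.Prime 7) := ⟨by norm_num⟩
  obtain ⟨ζ, hζ⟩ := exists_prime_orderOf_dvd_card' (G := Kˣ) 7 hdvd
  have hz7 : (ζ : K) ^ 7 = 1 := by
    have h : ζ ^ 7 = 1 := by rw [← hζ]; exact pow_orderOf_eq_one ζ
    rw [← Units.val_pow_eq_pow_val, h, Units.val_one]
  have hzne : (ζ : K) ≠ 1 := by
    intro h
    have : ζ = 1 := Units.ext (by simpa using h)
    rw [this, orderOf_one] at hζ
    norm_num at hζ
  set z : K := (ζ : K) with hz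
  have hprod : (z + 1) * (z ^ 3 + z + 1) * (z ^ 3 + z ^ 2 + 1) = 0 := by
    linear_combination hz7 + (z ^ 6 + z ^ 5 + 2 * z ^ 4 + 2 * z ^ 3 + z ^ 2 + z + 1) * h2
  rcases mul_eq_zero.mp hprod with h' | h3
  · rcases mul_eq_zero.mp h' with h1 | h3
    · exfalso
      apply hzne
      linear_combination h1 - h2
    · -- z^3 + z + 1 = 0 : take ε = z^6
      refine ⟨z ^ 6, ?_⟩
      have : z ^ 18 + z ^ 12 + 1 = 0 := by
        linear_combination (z ^ 15 - z ^ 13 - z ^ 12 + z ^ 11 + 2 * z ^ 10 + z ^ 9 - 3 * z ^ 8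
          - 3 * z ^ 7 + 2 * z ^ 6 + 6 * z ^ 5 + z ^ 4 - 8 * z ^ 3 - 7 * z ^ 2 + 7 * z + 15) * h3
          + (-11 * z - 7) * h2
      calc (z ^ 6) ^ 3 + (z ^ 6) ^ 2 + 1 = z ^ 18 + z ^ 12 + 1 := by ring
        _ = 0 := this
  · exact ⟨z, h3⟩

end Aux

/-- **Remark.** Let `m` be a positive integer with `m ≡ 2 (mod 3)` and `F = 𝔽_{2^(3m)}`. Then
`f(x) = x^(2^m+1) + x^(2^(2m)+2^m)` is NOT pseudo-planar on `F`. More precisely, there exists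
`ε ∈ F` with `ε³ + ε² + 1 = 0`, and for any such `ε` one has
`N₃(ε) + Tr₃(ε³ + ε^(1+2^(m+1))) = 0`, where `Tr₃(x) = x + x^(2^m) + x^(2^(2m))` and
`N₃(x) = x^(1+2^m+2^(2m))`. -/
theorem not_pseudoPlanar_of_mod_three_eq_two
    (m : ℕ) (hm : 0 < m) (hm3 : m % 3 = 2)
    (Tr₃ N₃ : GaloisField 2 (3 * m) → GaloisField 2 (3 * m))
    (hTr : ∀ x, Tr₃ x = x + x ^ 2 ^ m + x ^ 2 ^ (2 * m))
    (hN : ∀ x, N₃ x = x ^ (1 + 2 ^ m + 2 ^ (2 * m)))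
    (f : GaloisField 2 (3 * m) → GaloisField 2 (3 * m))
    (hf : ∀ x, f x = x ^ (2 ^ m + 1) + x ^ (2 ^ (2 * m) + 2 ^ m)) :
    (¬ ∀ ε : GaloisField 2 (3 * m), ε ≠ 0 →
        Function.Bijective (fun x => f (x + ε) + f x + ε * x)) ∧
    (∃ ε : GaloisField 2 (3 * m), ε ^ 3 + ε ^ 2 + 1 = 0) ∧
    (∀ ε : GaloisField 2 (3 * m), ε ^ 3 + ε ^ 2 + 1 = 0 →
        N₃ ε + Tr₃ (ε ^ 3 + ε ^ (1 + 2 ^ (m + 1))) = 0) := by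
  have h2 : (2 : GaloisField 2 (3 * m)) = 0 := by
    have := CharP.cast_eq_zero (GaloisField 2 (3 * m)) 2
    exact_mod_cast this
  obtain ⟨ε, hε⟩ := aux_exists_root m hm
  -- basic facts about any root of X^3+X^2+1
  have key : ∀ ε : GaloisField 2 (3 * m), ε ^ 3 + ε ^ 2 + 1 = 0 →
      (ε ^ 7 = 1 ∧ 2 ^ m % 7 = 4 ∧ 2 ^ (2 * m) % 7 = 2 ∧ 2 ^ (m + 1) % 7 = 1) := by
    intro ε hε
    have h7 : ε ^ 7 = 1 := by
      linear_combination (ε ^ 4 - ε ^ 3 + ε ^ 2 - 2 * ε + 3) * hε + (-2 * ε ^ 2 + ε - 2) * h2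
    refine ⟨h7, ?_, ?_, ?_⟩
    · have := aux_two_pow_mod m 2 hm3; simpa using this
    · have := aux_two_pow_mod (2 * m) 1 (by omega); simpa using this
    · have := aux_two_pow_mod (m + 1) 0 (by omega); simpa using this
  refine ⟨?_, ⟨ε, hε⟩, ?_⟩
  · -- non-bijectivity
    intro hall
    obtain ⟨h7, ha, hb, -⟩ := key ε hε
    have hεne : ε ≠ 0 := by
      intro h
      rw [h] at hε
      simp at hε
    have hinj := (hall ε hεne).injective
    have hcollide : (fun x => f (x + ε) + f x + ε * x) (ε ^ 2)
        = (fun x => f (x + ε) + f x + ε * x) 0 := by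
      simp only [hf, zero_add, mul_zero]
      have h6 : ε ^ 2 + ε = ε ^ 6 := by
        linear_combination (-ε ^ 3 + ε ^ 2 - ε + 2) * hε + (-ε ^ 2 + ε - 1) * h2
      rw [h6]
      rw [← pow_mul ε 6 (2 ^ m + 1), ← pow_mul ε 6 (2 ^ (2 * m) + 2 ^ m),
        ← pow_mul ε 2 (2 ^ m + 1), ← pow_mul ε 2 (2 ^ (2 * m) + 2 ^ m)]
      rw [aux_pow_mod_seven ε h7 (6 * (2 ^ m + 1)) 2 (by omega),
        aux_pow_mod_seven ε h7 (6 * (2 ^ (2 * m) + 2 ^ m)) 1 (by omega),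
        aux_pow_mod_seven ε h7 (2 * (2 ^ m + 1)) 3 (by omega),
        aux_pow_mod_seven ε h7 (2 * (2 ^ (2 * m) + 2 ^ m)) 5 (by omega),
        aux_pow_mod_seven ε h7 (2 ^ m + 1) 5 (by omega),
        aux_pow_mod_seven ε h7 (2 ^ (2 * m) + 2 ^ m) 6 (by omega),
        zero_pow (by positivity : 2 ^ m + 1 ≠ 0),
        zero_pow (by positivity : 2 ^ (2 * m) + 2 ^ m ≠ 0)]
      linear_combination (-ε ^ 3 + ε ^ 2 - ε + 4) * hε + (-2 * ε ^ 2 + ε - 2) * h2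
    have := hinj hcollide
    exact pow_ne_zero 2 hεne this
  · -- the norm/trace identity
    intro ε hε
    obtain ⟨h7, ha, hb, hc⟩ := key ε hε
    rw [hN, hTr]
    rw [aux_pow_mod_seven ε h7 (1 + 2 ^ m + 2 ^ (2 * m)) 0 (by omega),
      aux_pow_mod_seven ε h7 (1 + 2 ^ (m + 1)) 2 (by omega)]
    have ht : ε ^ 3 + ε ^ 2 = 1 := by linear_combination hε - h2
    rw [ht, pow_zero, one_pow, one_pow]
    linear_combination 2 * h2
end

section
/- Let m be a positive integer and F = 𝔽_{2^{3m}}. The function f : F → F defined by f(x) = x^{2^{2m}+1} + x^{2^{2m}+2^m} is pseudo-planar on F if and only if for every ε ∈ F with ε ≠ 0 one has N₃(ε) + Tr₃(ε^{3} + ε^{2+2^{m}}) ≠ 0. -/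
open Polynomial in
lemma aux_poly {K : Type*} [Field K] [Fintype K] {q : ℕ} (hq : 2 ≤ q)
    (hcard : q ^ 2 < Fintype.card K) {r0 r1 r2 : K}
    (h : ∀ y : K, r0 * y + r1 * y ^ q + r2 * y ^ q ^ 2 = 0) :
    r0 = 0 ∧ r1 = 0 ∧ r2 = 0 := by
  have h1q : 1 < q := hq
  have hqq : q < q ^ 2 := by nlinarith
  set P : K[X] := C r0 * X + C r1 * X ^ q + C r2 * X ^ q ^ 2 with hP
  have hdeg : P.natDegree ≤ q ^ 2 := by
    refine (natDegree_add_le _ _).trans (max_le ((natDegree_add_le _ _).trans (max_le ?_ ?_)) ?_)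
    · exact (natDegree_C_mul_le _ _).trans (by simp; omega)
    · exact (natDegree_C_mul_le _ _).trans (by simp [natDegree_X_pow]; omega)
    · exact (natDegree_C_mul_le _ _).trans (by simp [natDegree_X_pow])
  have hP0 : P = 0 := by
    refine eq_zero_of_natDegree_lt_card_of_eval_eq_zero P Function.injective_id
      (fun y => ?_) (lt_of_le_of_lt hdeg hcard)
    simp only [hP, eval_add, eval_mul, eval_C, eval_X, eval_pow, id]
    exact h y
  refine ⟨?_, ?_, ?_⟩
  · have := congrArg (fun p => Polynomial.coeff p 1) hP0
    simpa [hP, coeff_X_pow, h1q.ne, (h1q.trans hqq).ne] using this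
  · have := congrArg (fun p => Polynomial.coeff p q) hP0
    simpa [hP, coeff_X_pow, coeff_X, h1q.ne, h1q.ne', hqq.ne] using this
  · have := congrArg (fun p => Polynomial.coeff p (q ^ 2)) hP0
    simpa [hP, coeff_X_pow, coeff_X, (h1q.trans hqq).ne, (h1q.trans hqq).ne', hqq.ne'] using this

lemma aux_dickson {K : Type*} [Field K] [Fintype K] {q : ℕ} (hq : 2 ≤ q)
    (hcard : Fintype.card K = q ^ 3)
    (hfrob : ∀ x y : K, (x + y) ^ q = x ^ q + y ^ q) (a b c : K) :
    Function.Bijective (fun x : K => a * x + b * x ^ q + c * x ^ q ^ 2) ↔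
      (Matrix.det !![a, b, c; c ^ q, a ^ q, b ^ q; b ^ q ^ 2, c ^ q ^ 2, a ^ q ^ 2]) ≠ 0 := by
  have hq0 : q ≠ 0 := by omega
  set L : K → K := fun x => a * x + b * x ^ q + c * x ^ q ^ 2 with hL
  set M : Matrix (Fin 3) (Fin 3) K :=
    !![a, b, c; c ^ q, a ^ q, b ^ q; b ^ q ^ 2, c ^ q ^ 2, a ^ q ^ 2] with hM
  have hpow2 : ∀ z : K, z ^ q ^ 2 = (z ^ q) ^ q := fun z => by rw [← pow_mul, sq]
  have hpow3 : ∀ z : K, (z ^ q ^ 2) ^ q = z ^ q ^ 3 := fun z => by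
    rw [← pow_mul, ← pow_succ]
  have hq3 : ∀ z : K, z ^ q ^ 3 = z := fun z => by
    rw [← hcard]; exact FiniteField.pow_card z
  have key1 : ∀ x : K, (L x) ^ q = c ^ q * x + a ^ q * x ^ q + b ^ q * x ^ q ^ 2 := by
    intro x
    rw [hL]
    simp only [hfrob, mul_pow, hpow3, hq3, ← hpow2]
    ring
  have key2 : ∀ x : K, (L x) ^ q ^ 2 =
      b ^ q ^ 2 * x + c ^ q ^ 2 * x ^ q + a ^ q ^ 2 * x ^ q ^ 2 := by
    intro x
    rw [hpow2 (L x), key1, hfrob, hfrob]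
    simp only [mul_pow, hpow3, hq3, ← hpow2]
    ring
  have hLadd : ∀ x y : K, L (x + y) = L x + L y := by
    intro x y
    simp only [hL, hfrob, hpow2]
    ring
  constructor
  · -- bijective → det ≠ 0
    intro hbij hdet
    have hdetT : (Matrix.transpose M).det = 0 := by rw [Matrix.det_transpose]; exact hdet
    obtain ⟨v, hv0, hMv⟩ := Matrix.exists_mulVec_eq_zero_iff.mpr hdetT
    have e0 := congrFun hMv 0
    have e1 := congrFun hMv 1
    have e2 := congrFun hMv 2
    simp [Matrix.mulVec, dotProduct, Fin.sum_univ_three, hM] at e0 e1 e2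
    have hall : ∀ y : K, v 0 * y + v 1 * y ^ q + v 2 * y ^ q ^ 2 = 0 := by
      intro y
      obtain ⟨x, rfl⟩ := hbij.2 y
      show v 0 * L x + v 1 * (L x) ^ q + v 2 * (L x) ^ q ^ 2 = 0
      rw [key1, key2, hL]
      linear_combination x * e0 + x ^ q * e1 + x ^ q ^ 2 * e2
    have hcard2 : q ^ 2 < Fintype.card K := by
      rw [hcard]; exact Nat.pow_lt_pow_right (by omega) (by omega)
    obtain ⟨h0, h1, h2⟩ := aux_poly hq hcard2 hall
    apply hv0
    funext i
    fin_cases i <;> assumption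
  · -- det ≠ 0 → bijective
    intro hdet
    have hker : ∀ z : K, L z = 0 → z = 0 := by
      intro z hz
      have hzq : (L z) ^ q = 0 := by rw [hz]; exact zero_pow hq0
      have hzq2 : (L z) ^ q ^ 2 = 0 := by rw [hz]; exact zero_pow (pow_ne_zero 2 hq0)
      rw [key1] at hzq
      rw [key2] at hzq2
      have hz' : a * z + b * z ^ q + c * z ^ q ^ 2 = 0 := hz
      have hMv : M.mulVec ![z, z ^ q, z ^ q ^ 2] = 0 := by
        funext i
        fin_cases i
        · simpa [Matrix.mulVec, dotProduct, Fin.sum_univ_three, hM] using hz'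
        · simpa [Matrix.mulVec, dotProduct, Fin.sum_univ_three, hM] using hzq
        · simpa [Matrix.mulVec, dotProduct, Fin.sum_univ_three, hM] using hzq2
      have := Matrix.eq_zero_of_mulVec_eq_zero hdet hMv
      have := congrFun this 0
      simpa using this
    rw [← Finite.injective_iff_bijective]
    intro x y hxy
    have h0 : L (x - y) = 0 := by
      show (AddMonoidHom.mk' L hLadd) (x - y) = 0
      rw [map_sub]
      show L x - L y = 0
      rw [show L x = L y from hxy, sub_self]
    exact sub_eq_zero.mp (hker _ h0)

/-- The function `f(x) = x^(2^(2m)+1) + x^(2^(2m)+2^m)` on `F = 𝔽_{2^(3m)}` is pseudo-planar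
if and only if `N₃(ε) + Tr₃(ε³ + ε^(2+2^m)) ≠ 0` for every `ε ≠ 0`, where
`Tr₃(x) = x + x^(2^m) + x^(2^(2m))` and `N₃(x) = x^(1+2^m+2^(2m))`. -/
theorem pseudoPlanar_iff_norm_trace_condition₂
    (m : ℕ) (hm : 0 < m)
    (Tr₃ N₃ : GaloisField 2 (3 * m) → GaloisField 2 (3 * m))
    (hTr : ∀ x, Tr₃ x = x + x ^ 2 ^ m + x ^ 2 ^ (2 * m))
    (hN : ∀ x, N₃ x = x ^ (1 + 2 ^ m + 2 ^ (2 * m)))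
    (f : GaloisField 2 (3 * m) → GaloisField 2 (3 * m))
    (hf : ∀ x, f x = x ^ (2 ^ (2 * m) + 1) + x ^ (2 ^ (2 * m) + 2 ^ m)) :
    (∀ ε : GaloisField 2 (3 * m), ε ≠ 0 →
        Function.Bijective (fun x => f (x + ε) + f x + ε * x)) ↔
    (∀ ε : GaloisField 2 (3 * m), ε ≠ 0 →
        N₃ ε + Tr₃ (ε ^ 3 + ε ^ (2 + 2 ^ m)) ≠ 0) := by
  haveI : Fintype (GaloisField 2 (3 * m)) := Fintype.ofFinite _
  have hq : 2 ≤ 2 ^ m := by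
    calc 2 = 2 ^ 1 := (pow_one 2).symm
    _ ≤ 2 ^ m := Nat.pow_le_pow_right (by norm_num) hm
  have hq2m : (2 : ℕ) ^ (2 * m) = (2 ^ m) ^ 2 := pow_mul' 2 2 m
  have hcard : Fintype.card (GaloisField 2 (3 * m)) = (2 ^ m) ^ 3 := by
    rw [← Nat.card_eq_fintype_card, GaloisField.card 2 (3 * m) (by omega : 3 * m ≠ 0)]
    exact pow_mul' 2 3 m
  have h2 : (2 : GaloisField 2 (3 * m)) = 0 := by
    have := CharP.cast_eq_zero (GaloisField 2 (3 * m)) 2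
    simpa using this
  have hfrob : ∀ x y : GaloisField 2 (3 * m),
      (x + y) ^ 2 ^ m = x ^ 2 ^ m + y ^ 2 ^ m := fun x y => add_pow_char_pow x y 2 m
  have hpow2 : ∀ z : GaloisField 2 (3 * m), z ^ (2 ^ m) ^ 2 = (z ^ 2 ^ m) ^ 2 ^ m :=
    fun z => by rw [sq (2 ^ m : ℕ), pow_mul]
  have hq3 : ∀ z : GaloisField 2 (3 * m), z ^ (2 ^ m) ^ 3 = z := fun z => by
    rw [← hcard]; exact FiniteField.pow_card z
  have hfrob2 : ∀ x y : GaloisField 2 (3 * m),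
      (x + y) ^ (2 ^ m) ^ 2 = x ^ (2 ^ m) ^ 2 + y ^ (2 ^ m) ^ 2 := by
    intro x y
    rw [hpow2, hfrob, hfrob, ← hpow2, ← hpow2]
  refine forall_congr' fun ε => imp_congr_right fun hε => ?_
  have hvq : (ε ^ 2 ^ m) ^ 2 ^ m = ε ^ (2 ^ m) ^ 2 := (hpow2 ε).symm
  have hwq : (ε ^ (2 ^ m) ^ 2) ^ 2 ^ m = ε := by
    rw [← pow_mul, ← pow_succ]; exact hq3 ε
  have hmap : ∀ x : GaloisField 2 (3 * m), f (x + ε) + f x + ε * x =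
      ((ε + ε ^ (2 ^ m) ^ 2) * x + ε ^ (2 ^ m) ^ 2 * x ^ 2 ^ m
        + (ε + ε ^ 2 ^ m) * x ^ (2 ^ m) ^ 2)
      + (ε ^ (2 ^ m) ^ 2 * ε + ε ^ (2 ^ m) ^ 2 * ε ^ 2 ^ m) := by
    intro x
    rw [hf, hf, hq2m]
    rw [pow_add, pow_add, pow_add, pow_add, pow_one, pow_one, hfrob2, hfrob]
    linear_combination (x ^ (2 ^ m) ^ 2 * x + x ^ (2 ^ m) ^ 2 * x ^ 2 ^ m) * h2
  have hcomp : (fun x : GaloisField 2 (3 * m) => f (x + ε) + f x + ε * x) =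
      (Equiv.addRight (ε ^ (2 ^ m) ^ 2 * ε + ε ^ (2 ^ m) ^ 2 * ε ^ 2 ^ m)) ∘
        (fun x => (ε + ε ^ (2 ^ m) ^ 2) * x + ε ^ (2 ^ m) ^ 2 * x ^ 2 ^ m
          + (ε + ε ^ 2 ^ m) * x ^ (2 ^ m) ^ 2) := by
    funext x
    simpa using hmap x
  rw [hcomp, Equiv.comp_bijective, aux_dickson hq hcard hfrob]
  have hb_q2 : (ε ^ (2 ^ m) ^ 2) ^ (2 ^ m) ^ 2 = ε ^ 2 ^ m := by
    rw [hpow2, hwq]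
  have ea_q : (ε + ε ^ (2 ^ m) ^ 2) ^ 2 ^ m = ε ^ 2 ^ m + ε := by
    rw [hfrob, hwq]
  have ec_q : (ε + ε ^ 2 ^ m) ^ 2 ^ m = ε ^ 2 ^ m + ε ^ (2 ^ m) ^ 2 := by
    rw [hfrob, hvq]
  have ea_q2 : (ε + ε ^ (2 ^ m) ^ 2) ^ (2 ^ m) ^ 2 = ε ^ (2 ^ m) ^ 2 + ε ^ 2 ^ m := by
    rw [hfrob2, hb_q2]
  have ec_q2 : (ε + ε ^ 2 ^ m) ^ (2 ^ m) ^ 2 = ε ^ (2 ^ m) ^ 2 + ε := by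
    rw [hfrob2, hpow2 (ε ^ 2 ^ m), hvq, hwq]
  have hdet_eq : Matrix.det !![ε + ε ^ (2 ^ m) ^ 2, ε ^ (2 ^ m) ^ 2, ε + ε ^ 2 ^ m;
        (ε + ε ^ 2 ^ m) ^ 2 ^ m, (ε + ε ^ (2 ^ m) ^ 2) ^ 2 ^ m, (ε ^ (2 ^ m) ^ 2) ^ 2 ^ m;
        (ε ^ (2 ^ m) ^ 2) ^ (2 ^ m) ^ 2, (ε + ε ^ 2 ^ m) ^ (2 ^ m) ^ 2,
          (ε + ε ^ (2 ^ m) ^ 2) ^ (2 ^ m) ^ 2] =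
      N₃ ε + Tr₃ (ε ^ 3 + ε ^ (2 + 2 ^ m)) := by
    rw [ec_q, ea_q, hwq, hb_q2, ec_q2, ea_q2, Matrix.det_fin_three]
    rw [hN, hTr, hq2m]
    have hNe : ε ^ (1 + 2 ^ m + (2 ^ m) ^ 2) = ε * ε ^ 2 ^ m * ε ^ (2 ^ m) ^ 2 := by
      rw [pow_add, pow_add, pow_one]
    have hye : ε ^ 3 + ε ^ (2 + 2 ^ m) = ε ^ 3 + ε ^ 2 * ε ^ 2 ^ m := by
      rw [pow_add]
    have hyq : (ε ^ 3 + ε ^ 2 * ε ^ 2 ^ m) ^ 2 ^ m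
        = (ε ^ 2 ^ m) ^ 3 + (ε ^ 2 ^ m) ^ 2 * ε ^ (2 ^ m) ^ 2 := by
      rw [hfrob, mul_pow, pow_right_comm ε 3 (2 ^ m), pow_right_comm ε 2 (2 ^ m), hvq]
    have hyq2 : (ε ^ 3 + ε ^ 2 * ε ^ 2 ^ m) ^ (2 ^ m) ^ 2
        = (ε ^ (2 ^ m) ^ 2) ^ 3 + (ε ^ (2 ^ m) ^ 2) ^ 2 * ε := by
      rw [hpow2, hyq, hfrob, mul_pow, pow_right_comm (ε ^ 2 ^ m) 3 (2 ^ m),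
        pow_right_comm (ε ^ 2 ^ m) 2 (2 ^ m), hvq, hwq]
    rw [hNe, hye, hyq, hyq2]
    simp only [Matrix.cons_val_zero, Matrix.cons_val_one, Matrix.cons_val_two, Matrix.head_cons,
      Matrix.tail_cons, Matrix.cons_val', Matrix.empty_val', Matrix.cons_val_fin_one,
      Matrix.head_fin_const, Matrix.of_apply]
    linear_combination (2 * ε * ε ^ 2 ^ m * ε ^ (2 ^ m) ^ 2 - ε ^ 3 - (ε ^ 2 ^ m) ^ 3
      - (ε ^ (2 ^ m) ^ 2) ^ 3) * h2
  rw [hdet_eq]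
end

section
/- Let m be a positive integer with m ≢ 1 (mod 3), and let F = 𝔽_{2^{3m}}. Then the function f : F → F defined by f(x) = x^{2^{2m}+1} + x^{2^{2m}+2^m} is pseudo-planar on F. -/
/-- **Proposition.** Let `m` be a positive integer with `m ≢ 1 (mod 3)` and `F = 𝔽_{2^(3m)}`.
Then `f(x) = x^(2^(2m)+1) + x^(2^(2m)+2^m)` is pseudo-planar on `F`, i.e. for every `ε ≠ 0`
the map `x ↦ f(x+ε) + f(x) + ε·x` is a bijection of `F`. -/
theorem pseudoPlanar_binomial_of_mod_three_ne_one
    (m : ℕ) (hm : 0 < m) (hm3 : m % 3 ≠ 1)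
    (f : GaloisField 2 (3 * m) → GaloisField 2 (3 * m))
    (hf : ∀ x, f x = x ^ (2 ^ (2 * m) + 1) + x ^ (2 ^ (2 * m) + 2 ^ m)) :
    ∀ ε : GaloisField 2 (3 * m), ε ≠ 0 →
      Function.Bijective (fun x => f (x + ε) + f x + ε * x) := by
  intro ε hε
  haveI : Fintype (GaloisField 2 (3 * m)) := Fintype.ofFinite _
  have hcard : Fintype.card (GaloisField 2 (3 * m)) = 2 ^ (3 * m) := by
    rw [← Nat.card_eq_fintype_card]
    exact GaloisField.card 2 (3 * m) (by omega)
  have htwo : (2 : GaloisField 2 (3 * m)) = 0 := CharTwo.two_eq_zero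
  have hQ0 : (2 : ℕ) ^ m ≠ 0 := by positivity
  have hfrob : ∀ u v : GaloisField 2 (3 * m),
      (u + v) ^ (2 ^ m) = u ^ (2 ^ m) + v ^ (2 ^ m) := fun u v => add_pow_char_pow ..
  have hpow3 : ∀ z : GaloisField 2 (3 * m),
      ((z ^ (2 ^ m)) ^ (2 ^ m)) ^ (2 ^ m) = z := by
    intro z
    rw [← pow_mul, ← pow_mul,
      show 2 ^ m * (2 ^ m * 2 ^ m) = 2 ^ (3 * m) by
        rw [← pow_add, ← pow_add]; congr 1; omega,
      ← hcard, FiniteField.pow_card]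
  -- the auxiliary element θ of order 7 with θ^3 + θ^2 + 1 = 0
  haveI : Fact (Nat.Prime 7) := ⟨by norm_num⟩
  have h7dvd : (7 : ℕ) ∣ Nat.card (GaloisField 2 (3 * m))ˣ := by
    rw [Nat.card_units, GaloisField.card 2 (3 * m) (by omega),
      show (2 : ℕ) ^ (3 * m) = 8 ^ m by
        rw [show (8 : ℕ) = 2 ^ 3 from rfl, ← pow_mul]]
    simpa using Nat.sub_dvd_pow_sub_pow 8 1 m
  obtain ⟨w, hw⟩ := exists_prime_orderOf_dvd_card' 7 h7dvd
  obtain ⟨g, hgdef⟩ : ∃ g : GaloisField 2 (3 * m), g = (w : GaloisField 2 (3 * m)) := ⟨_, rfl⟩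
  have hg7 : g ^ 7 = 1 := by
    have h := pow_orderOf_eq_one w
    rw [hw] at h
    rw [hgdef]
    simpa using congrArg Units.val h
  have hg1 : g ≠ 1 := by
    intro he
    rw [hgdef] at he
    have hw1 : w = 1 := Units.val_eq_one.mp he
    rw [hw1, orderOf_one] at hw
    norm_num at hw
  have hfac7 : (g - 1) * (g ^ 6 + g ^ 5 + g ^ 4 + g ^ 3 + g ^ 2 + g + 1) = 0 := by
    linear_combination hg7
  have hsum : g ^ 6 + g ^ 5 + g ^ 4 + g ^ 3 + g ^ 2 + g + 1 = 0 := by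
    rcases mul_eq_zero.mp hfac7 with h0 | h0
    · exact absurd (sub_eq_zero.mp h0) hg1
    · exact h0
  have hprod : (g ^ 3 + g + 1) * (g ^ 3 + g ^ 2 + 1) = 0 := by
    linear_combination hsum + g ^ 3 * htwo
  obtain ⟨θ, hθ⟩ : ∃ θ : GaloisField 2 (3 * m), θ ^ 3 + θ ^ 2 + 1 = 0 := by
    rcases mul_eq_zero.mp hprod with hc | hc
    · exact ⟨g ^ 6, by
        linear_combination (g ^ 11 + g ^ 5 + g ^ 4) * hg7 + (g ^ 2 + g - 1) * hc
          + (-g ^ 2 + 1) * htwo⟩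
    · exact ⟨g, hc⟩
  have hθ7 : θ ^ 7 = 1 := by
    linear_combination (θ ^ 4 - θ ^ 3 + θ ^ 2 - 2 * θ + 3) * hθ + (-2 * θ ^ 2 + θ - 2) * htwo
  -- the key elimination: no ε ≠ 0 can satisfy the linear relation with any root η
  have main : ∀ η : GaloisField 2 (3 * m), η ^ 3 + η ^ 2 + 1 = 0 →
      ε + η * ε ^ (2 ^ m) + η ^ 3 * ((ε ^ (2 ^ m)) ^ (2 ^ m)) = 0 → False := by
    intro η hη hlin
    have hη7 : η ^ 7 = 1 := by
      linear_combination (η ^ 4 - η ^ 3 + η ^ 2 - 2 * η + 3) * hη + (-2 * η ^ 2 + η - 2) * htwo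
    have hη0 : η ≠ 0 := by
      intro h0
      rw [h0] at hη
      simp at hη
    have hlin2' := congrArg (fun z : GaloisField 2 (3 * m) => z ^ (2 ^ m)) hlin
    simp only [hfrob, mul_pow, hpow3, zero_pow hQ0] at hlin2'
    have hqm : η ^ (2 ^ m) = η ^ (2 ^ (m % 3)) := by
      obtain ⟨s, hs⟩ : (7 : ℕ) ∣ 8 ^ (m / 3) - 1 := by
        simpa using Nat.sub_dvd_pow_sub_pow 8 1 (m / 3)
      have h8pos : 1 ≤ (8 : ℕ) ^ (m / 3) := Nat.one_le_pow _ _ (by norm_num)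
      have h8 : (8 : ℕ) ^ (m / 3) = 7 * s + 1 := by omega
      have hsplit : (2 : ℕ) ^ m = 7 * (s * 2 ^ (m % 3)) + 2 ^ (m % 3) := by
        have h1 : (2 : ℕ) ^ m = 2 ^ (m % 3) * 8 ^ (m / 3) := by
          rw [show (8 : ℕ) = 2 ^ 3 from rfl, ← pow_mul, ← pow_add]
          congr 1
          omega
        rw [h1, h8]
        ring
      calc η ^ (2 ^ m) = η ^ (7 * (s * 2 ^ (m % 3)) + 2 ^ (m % 3)) := by rw [← hsplit]
        _ = (η ^ 7) ^ (s * 2 ^ (m % 3)) * η ^ (2 ^ (m % 3)) := by rw [pow_add, pow_mul]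
        _ = η ^ (2 ^ (m % 3)) := by rw [hη7, one_pow, one_mul]
    rcases (show m % 3 = 0 ∨ m % 3 = 2 by omega) with h3 | h3
    · -- m ≡ 0 (mod 3)
      have hN : η ^ (2 ^ m) = η := by rw [hqm, h3, pow_zero, pow_one]
      have hlin2 : ε ^ (2 ^ m) + η * ((ε ^ (2 ^ m)) ^ (2 ^ m)) + η ^ 3 * ε = 0 := by
        linear_combination hlin2' +
          (-((ε ^ (2 ^ m)) ^ (2 ^ m) + ((η ^ (2 ^ m)) ^ 2 + η ^ (2 ^ m) * η + η ^ 2) * ε)) * hN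
      have hlin3' := congrArg (fun z : GaloisField 2 (3 * m) => z ^ (2 ^ m)) hlin2
      simp only [hfrob, mul_pow, hpow3, zero_pow hQ0] at hlin3'
      have hlin3 : (ε ^ (2 ^ m)) ^ (2 ^ m) + η * ε + η ^ 3 * ε ^ (2 ^ m) = 0 := by
        linear_combination hlin3' +
          (-(ε + ((η ^ (2 ^ m)) ^ 2 + η ^ (2 ^ m) * η + η ^ 2) * ε ^ (2 ^ m))) * hN
      have hz : (η ^ 2 + η + 1) * ε = 0 := by
        linear_combination (-η ^ 4 + 1) * hlin + (η ^ 6 - η) * hlin2 + (-η ^ 3 + η ^ 2) * hlin3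
          + (-ε * η ^ 2) * hη7 + (3 * ε * η - 4 * ε) * hη + (2 * ε * η ^ 2 - ε * η + 2 * ε) * htwo
      rcases mul_eq_zero.mp hz with hsq | h0
      · have hcube : η ^ 3 = 1 := by
          linear_combination (η + 1) * hsq - (η ^ 2 + η + 1) * htwo
        have h2z : η ^ 2 = 0 := by linear_combination hη - hcube - htwo
        exact hη0 ((pow_eq_zero_iff two_ne_zero).mp h2z)
      · exact hε h0
    · -- m ≡ 2 (mod 3)
      have hN : η ^ (2 ^ m) = η ^ 4 := by rw [hqm, h3]; norm_num
      have hlin2 : ε ^ (2 ^ m) + η ^ 4 * ((ε ^ (2 ^ m)) ^ (2 ^ m)) + η ^ 12 * ε = 0 := by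
        linear_combination hlin2' +
          (-(ε * η ^ 8) - η ^ (2 ^ m) * ε * η ^ 4 - (η ^ (2 ^ m)) ^ 2 * ε
            - (ε ^ (2 ^ m)) ^ (2 ^ m)) * hN
      have hlin3' := congrArg (fun z : GaloisField 2 (3 * m) => z ^ (2 ^ m)) hlin2
      simp only [hfrob, mul_pow, hpow3, zero_pow hQ0] at hlin3'
      have hlin3 : (ε ^ (2 ^ m)) ^ (2 ^ m) + η ^ 2 * ε + η ^ 6 * ε ^ (2 ^ m) = 0 := by
        linear_combination hlin3' +
          (-(ε ^ (2 ^ m)) * η ^ 44 - η ^ (2 ^ m) * ε ^ (2 ^ m) * η ^ 40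
            - (η ^ (2 ^ m)) ^ 2 * ε ^ (2 ^ m) * η ^ 36
            - (η ^ (2 ^ m)) ^ 3 * ε ^ (2 ^ m) * η ^ 32
            - (η ^ (2 ^ m)) ^ 4 * ε ^ (2 ^ m) * η ^ 28
            - (η ^ (2 ^ m)) ^ 5 * ε ^ (2 ^ m) * η ^ 24
            - (η ^ (2 ^ m)) ^ 6 * ε ^ (2 ^ m) * η ^ 20
            - (η ^ (2 ^ m)) ^ 7 * ε ^ (2 ^ m) * η ^ 16
            - (η ^ (2 ^ m)) ^ 8 * ε ^ (2 ^ m) * η ^ 12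
            - (η ^ (2 ^ m)) ^ 9 * ε ^ (2 ^ m) * η ^ 8
            - (η ^ (2 ^ m)) ^ 10 * ε ^ (2 ^ m) * η ^ 4
            - ε * η ^ 12 - (η ^ (2 ^ m)) ^ 11 * ε ^ (2 ^ m)
            - η ^ (2 ^ m) * ε * η ^ 8 - (η ^ (2 ^ m)) ^ 2 * ε * η ^ 4
            - (η ^ (2 ^ m)) ^ 3 * ε) * hN +
          (-(ε ^ (2 ^ m)) * η ^ 41 - ε ^ (2 ^ m) * η ^ 34 - ε ^ (2 ^ m) * η ^ 27
            - ε ^ (2 ^ m) * η ^ 20 - ε ^ (2 ^ m) * η ^ 13 - ε * η ^ 9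
            - ε ^ (2 ^ m) * η ^ 6 - ε * η ^ 2) * hη7
      have hz : ε = 0 := by
        linear_combination (-η ^ 10 + 1) * hlin + (η ^ 9 - η) * hlin2 + (η ^ 5 - η ^ 3) * hlin3
          + (-ε * η ^ 14 - ε * η ^ 7 + ε * η ^ 6 + ε * η ^ 3 - 2 * ε) * hη7
          + (ε * η ^ 3) * hη + (-ε) * htwo
      exact hε hz
  -- now prove injectivity
  rw [← Finite.injective_iff_bijective]
  intro x₁ x₂ hx
  by_contra hne
  have hg := hx
  simp only [hf] at hg
  have hexp2 : (2 : ℕ) ^ (2 * m) = 2 ^ m * 2 ^ m := by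
    rw [← pow_add]
    congr 1
    omega
  have pow1 : ∀ z : GaloisField 2 (3 * m),
      z ^ (2 ^ (2 * m) + 1) = (z ^ (2 ^ m)) ^ (2 ^ m) * z := by
    intro z
    rw [pow_add, pow_one, hexp2, pow_mul]
  have pow2 : ∀ z : GaloisField 2 (3 * m),
      z ^ (2 ^ (2 * m) + 2 ^ m) = (z ^ (2 ^ m)) ^ (2 ^ m) * z ^ (2 ^ m) := by
    intro z
    rw [pow_add, hexp2, pow_mul]
  simp only [pow1, pow2, hfrob] at hg
  obtain ⟨p, hpdef⟩ : ∃ p : GaloisField 2 (3 * m), p = x₁ + x₂ := ⟨_, rfl⟩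
  have hp0 : p ≠ 0 := by
    intro h0
    rw [hpdef] at h0
    exact hne (by linear_combination h0 - x₂ * htwo)
  have hp1 : p ^ (2 ^ m) = x₁ ^ (2 ^ m) + x₂ ^ (2 ^ m) := by rw [hpdef]; exact hfrob _ _
  have hp2 : (p ^ (2 ^ m)) ^ (2 ^ m) = (x₁ ^ (2 ^ m)) ^ (2 ^ m) + (x₂ ^ (2 ^ m)) ^ (2 ^ m) := by
    rw [hp1, hfrob]
  have hE : (ε + ε ^ (2 ^ m)) * ((p ^ (2 ^ m)) ^ (2 ^ m))
      + (ε ^ (2 ^ m)) ^ (2 ^ m) * (p ^ (2 ^ m))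
      + ((ε ^ (2 ^ m)) ^ (2 ^ m) + ε) * p = 0 := by
    linear_combination hg + (ε ^ (2 ^ m)) ^ (2 ^ m) * hp1 + (ε + ε ^ (2 ^ m)) * hp2
      + ((ε ^ (2 ^ m)) ^ (2 ^ m) + ε) * hpdef
      + (ε * x₂ + ε * (x₂ ^ (2 ^ m)) ^ (2 ^ m) + ε ^ (2 ^ m) * (x₂ ^ (2 ^ m)) ^ (2 ^ m)
        + (ε ^ (2 ^ m)) ^ (2 ^ m) * x₂ + (ε ^ (2 ^ m)) ^ (2 ^ m) * x₂ ^ (2 ^ m)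
        - x₁ * (x₁ ^ (2 ^ m)) ^ (2 ^ m) - x₁ ^ (2 ^ m) * (x₁ ^ (2 ^ m)) ^ (2 ^ m)
        + x₂ * (x₂ ^ (2 ^ m)) ^ (2 ^ m) + x₂ ^ (2 ^ m) * (x₂ ^ (2 ^ m)) ^ (2 ^ m)) * htwo
  have hE2 := congrArg (fun z : GaloisField 2 (3 * m) => z ^ (2 ^ m)) hE
  simp only [hfrob, mul_pow, hpow3, zero_pow hQ0] at hE2
  have hE3 := congrArg (fun z : GaloisField 2 (3 * m) => z ^ (2 ^ m)) hE2
  simp only [hfrob, mul_pow, hpow3, zero_pow hQ0] at hE3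
  have hDp : (ε ^ 3 + (ε ^ (2 ^ m)) ^ 3 + ((ε ^ (2 ^ m)) ^ (2 ^ m)) ^ 3
      + ε ^ 2 * ε ^ (2 ^ m) + (ε ^ (2 ^ m)) ^ 2 * ((ε ^ (2 ^ m)) ^ (2 ^ m))
      + ((ε ^ (2 ^ m)) ^ (2 ^ m)) ^ 2 * ε + ε * ε ^ (2 ^ m) * ((ε ^ (2 ^ m)) ^ (2 ^ m))) * p
      = 0 := by
    linear_combination
      (ε * ε ^ (2 ^ m) + ε ^ 2 + ε ^ (2 ^ m) * ((ε ^ (2 ^ m)) ^ (2 ^ m))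
        + (ε ^ (2 ^ m)) ^ 2) * hE
      + (ε * ε ^ (2 ^ m) + ε * ((ε ^ (2 ^ m)) ^ (2 ^ m)) + ε ^ 2
        + ((ε ^ (2 ^ m)) ^ (2 ^ m)) ^ 2) * hE2
      + (ε * ((ε ^ (2 ^ m)) ^ (2 ^ m)) + ε ^ 2 + (ε ^ (2 ^ m)) ^ 2) * hE3
      + (-(p ^ (2 ^ m)) * ε * ε ^ (2 ^ m) * ((ε ^ (2 ^ m)) ^ (2 ^ m))
        - p ^ (2 ^ m) * ε * (ε ^ (2 ^ m)) ^ 2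
        - p ^ (2 ^ m) * ε * ((ε ^ (2 ^ m)) ^ (2 ^ m)) ^ 2
        - p ^ (2 ^ m) * ε ^ 2 * ε ^ (2 ^ m)
        - 2 * (p ^ (2 ^ m)) * ε ^ 2 * ((ε ^ (2 ^ m)) ^ (2 ^ m))
        - p ^ (2 ^ m) * ε ^ 3
        - p ^ (2 ^ m) * ε ^ (2 ^ m) * ((ε ^ (2 ^ m)) ^ (2 ^ m)) ^ 2
        - p ^ (2 ^ m) * (ε ^ (2 ^ m)) ^ 2 * ((ε ^ (2 ^ m)) ^ (2 ^ m))
        - (p ^ (2 ^ m)) ^ (2 ^ m) * ε * ε ^ (2 ^ m) * ((ε ^ (2 ^ m)) ^ (2 ^ m))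
        - (p ^ (2 ^ m)) ^ (2 ^ m) * ε * (ε ^ (2 ^ m)) ^ 2
        - (p ^ (2 ^ m)) ^ (2 ^ m) * ε * ((ε ^ (2 ^ m)) ^ (2 ^ m)) ^ 2
        - 2 * ((p ^ (2 ^ m)) ^ (2 ^ m)) * ε ^ 2 * ε ^ (2 ^ m)
        - (p ^ (2 ^ m)) ^ (2 ^ m) * ε ^ 2 * ((ε ^ (2 ^ m)) ^ (2 ^ m))
        - (p ^ (2 ^ m)) ^ (2 ^ m) * ε ^ 3
        - (p ^ (2 ^ m)) ^ (2 ^ m) * (ε ^ (2 ^ m)) ^ 2 * ((ε ^ (2 ^ m)) ^ (2 ^ m))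
        - (p ^ (2 ^ m)) ^ (2 ^ m) * (ε ^ (2 ^ m)) ^ 3
        - 2 * ε * ε ^ (2 ^ m) * ((ε ^ (2 ^ m)) ^ (2 ^ m)) * p
        - ε * (ε ^ (2 ^ m)) ^ 2 * p
        - ε ^ 2 * ε ^ (2 ^ m) * p
        - ε ^ 2 * ((ε ^ (2 ^ m)) ^ (2 ^ m)) * p
        - ε ^ (2 ^ m) * ((ε ^ (2 ^ m)) ^ (2 ^ m)) ^ 2 * p) * htwo
  have hD : ε ^ 3 + (ε ^ (2 ^ m)) ^ 3 + ((ε ^ (2 ^ m)) ^ (2 ^ m)) ^ 3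
      + ε ^ 2 * ε ^ (2 ^ m) + (ε ^ (2 ^ m)) ^ 2 * ((ε ^ (2 ^ m)) ^ (2 ^ m))
      + ((ε ^ (2 ^ m)) ^ (2 ^ m)) ^ 2 * ε + ε * ε ^ (2 ^ m) * ((ε ^ (2 ^ m)) ^ (2 ^ m)) = 0 := by
    rcases mul_eq_zero.mp hDp with h0 | h0
    · exact h0
    · exact absurd h0 hp0
  have hfac : (ε + θ * ε ^ (2 ^ m) + θ ^ 3 * ((ε ^ (2 ^ m)) ^ (2 ^ m)))
      * (ε + θ ^ 2 * ε ^ (2 ^ m) + θ ^ 6 * ((ε ^ (2 ^ m)) ^ (2 ^ m)))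
      * (ε + θ ^ 4 * ε ^ (2 ^ m) + θ ^ 12 * ((ε ^ (2 ^ m)) ^ (2 ^ m))) = 0 := by
    linear_combination hD
      + (((ε ^ (2 ^ m)) ^ (2 ^ m)) ^ 3 * θ ^ 14
        + ε ^ (2 ^ m) * ((ε ^ (2 ^ m)) ^ (2 ^ m)) ^ 2 * θ ^ 12
        + ε * ((ε ^ (2 ^ m)) ^ (2 ^ m)) ^ 2 * θ ^ 11
        + ε ^ (2 ^ m) * ((ε ^ (2 ^ m)) ^ (2 ^ m)) ^ 2 * θ ^ 10
        + ε * ((ε ^ (2 ^ m)) ^ (2 ^ m)) ^ 2 * θ ^ 8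
        + (ε ^ (2 ^ m)) ^ 2 * ((ε ^ (2 ^ m)) ^ (2 ^ m)) * θ ^ 8
        + ε * ε ^ (2 ^ m) * ((ε ^ (2 ^ m)) ^ (2 ^ m)) * θ ^ 7
        + ((ε ^ (2 ^ m)) ^ (2 ^ m)) ^ 3 * θ ^ 7
        + ε * ε ^ (2 ^ m) * ((ε ^ (2 ^ m)) ^ (2 ^ m)) * θ ^ 6
        + ε ^ (2 ^ m) * ((ε ^ (2 ^ m)) ^ (2 ^ m)) ^ 2 * θ ^ 6
        + ε ^ 2 * ((ε ^ (2 ^ m)) ^ (2 ^ m)) * θ ^ 5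
        + ε ^ (2 ^ m) * ((ε ^ (2 ^ m)) ^ (2 ^ m)) ^ 2 * θ ^ 5
        + ε * ((ε ^ (2 ^ m)) ^ (2 ^ m)) ^ 2 * θ ^ 4
        + (ε ^ (2 ^ m)) ^ 2 * ((ε ^ (2 ^ m)) ^ (2 ^ m)) * θ ^ 4
        + ε * ε ^ (2 ^ m) * ((ε ^ (2 ^ m)) ^ (2 ^ m)) * θ ^ 3
        + ε ^ (2 ^ m) * ((ε ^ (2 ^ m)) ^ (2 ^ m)) ^ 2 * θ ^ 3
        + ε * ((ε ^ (2 ^ m)) ^ (2 ^ m)) ^ 2 * θ ^ 2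
        + (ε ^ (2 ^ m)) ^ 2 * ((ε ^ (2 ^ m)) ^ (2 ^ m)) * θ ^ 2
        + ε * ((ε ^ (2 ^ m)) ^ (2 ^ m)) ^ 2 * θ
        + (ε ^ (2 ^ m)) ^ 2 * ((ε ^ (2 ^ m)) ^ (2 ^ m)) * θ
        + 3 * ε * ε ^ (2 ^ m) * ((ε ^ (2 ^ m)) ^ (2 ^ m))
        + (ε ^ (2 ^ m)) ^ 3 + ((ε ^ (2 ^ m)) ^ (2 ^ m)) ^ 3) * hθ7
      + (ε * ε ^ (2 ^ m) * ((ε ^ (2 ^ m)) ^ (2 ^ m)) * θ ^ 3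
        + ε * (ε ^ (2 ^ m)) ^ 2 * θ ^ 3
        + ε ^ 2 * ((ε ^ (2 ^ m)) ^ (2 ^ m)) * θ ^ 3
        + ε ^ (2 ^ m) * ((ε ^ (2 ^ m)) ^ (2 ^ m)) ^ 2 * θ ^ 3
        + ε * ((ε ^ (2 ^ m)) ^ (2 ^ m)) ^ 2 * θ
        + ε ^ 2 * ε ^ (2 ^ m) * θ
        + (ε ^ (2 ^ m)) ^ 2 * ((ε ^ (2 ^ m)) ^ (2 ^ m)) * θ
        - ε * ((ε ^ (2 ^ m)) ^ (2 ^ m)) ^ 2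
        - ε ^ 2 * ε ^ (2 ^ m)
        - (ε ^ (2 ^ m)) ^ 2 * ((ε ^ (2 ^ m)) ^ (2 ^ m))) * hθ
      + (ε * ((ε ^ (2 ^ m)) ^ (2 ^ m)) ^ 2 * θ ^ 2
        + ε ^ 2 * ε ^ (2 ^ m) * θ ^ 2
        + (ε ^ (2 ^ m)) ^ 2 * ((ε ^ (2 ^ m)) ^ (2 ^ m)) * θ ^ 2
        + ε * ε ^ (2 ^ m) * ((ε ^ (2 ^ m)) ^ (2 ^ m))) * htwo
  rcases mul_eq_zero.mp hfac with h' | hl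
  · rcases mul_eq_zero.mp h' with hl | hl
    · exact main θ hθ hl
    · exact main (θ ^ 2)
        (by linear_combination (θ ^ 3 - θ ^ 2 + 2 * θ - 3) * hθ + (2 * θ ^ 2 - θ + 2) * htwo)
        (by linear_combination hl)
  · exact main (θ ^ 4)
      (by linear_combination (θ ^ 5 + θ) * hθ7 + (θ ^ 2 - θ + 1) * hθ + (-θ ^ 2 + θ) * htwo)
      (by linear_combination hl)
end

section
/- Let m be a positive integer with m ≢ 1 (mod 3), and let F = 𝔽_{2^{3m}}. Then for every ε ∈ F with ε ≠ 0 one has ε^{1+2^m+2^{2m}} + Tr₃(ε^{3} + ε^{2+2^{m}}) ≠ 0. -/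
section Aux

variable {F : Type*} [Field F]

/-- Applying the `Q`-power Frobenius to a linear relation. -/
lemma aux_frobStep (Q : ℕ) (hQ : Q ≠ 0)
    (hadd : ∀ x y : F, (x + y) ^ Q = x ^ Q + y ^ Q)
    {ρ σ ρ' σ' A B C : F}
    (hρ : ρ ^ Q = ρ') (hσ : σ ^ Q = σ')
    (hA : A ^ Q = B) (hB : B ^ Q = C) (hC : C ^ Q = A)
    (h : A + ρ * B + σ * C = 0) : B + ρ' * C + σ' * A = 0 := by
  have h2 : (A + ρ * B + σ * C) ^ Q = 0 := by rw [h]; exact zero_pow hQ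
  rw [hadd, hadd, mul_pow, mul_pow, hρ, hσ, hA, hB, hC] at h2
  exact h2

lemma aux_case0a (ω X Y Z : F) (h2c : (2 : F) = 0) (hω : ω ^ 3 = ω + 1)
    (h0 : X + (ω + 1) * Y + ω ^ 2 * Z = 0)
    (h1 : Y + (ω + 1) * Z + ω ^ 2 * X = 0)
    (h2 : Z + (ω + 1) * X + ω ^ 2 * Y = 0) : X = 0 := by
  have hd : (ω ^ 2 + ω + 1) * X = 0 := by
    linear_combination (ω ^ 2 + ω) * h0 + (ω ^ 2 + 1) * h1 + h2 +
      (-ω * X - ω * Z - Y - 2 * Z) * hω +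
      (-ω ^ 2 * X - 2 * ω ^ 2 * Y - ω ^ 2 * Z - ω * X - ω * Y - 2 * ω * Z - Y - 2 * Z) * h2c
  have hinv : (ω ^ 2 + ω + 1) * ω ^ 2 = 1 := by
    linear_combination (ω + 1) * hω + (ω ^ 2 + ω) * h2c
  calc X = ω ^ 2 * ((ω ^ 2 + ω + 1) * X) := by
            rw [← mul_assoc, mul_comm (ω ^ 2), hinv, one_mul]
    _ = 0 := by rw [hd, mul_zero]

lemma aux_case0b (ω X Y Z : F) (h2c : (2 : F) = 0) (hω : ω ^ 3 = ω + 1)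
    (h0 : X + (ω ^ 2 + 1) * Y + (ω ^ 2 + ω) * Z = 0)
    (h1 : Y + (ω ^ 2 + 1) * Z + (ω ^ 2 + ω) * X = 0)
    (h2 : Z + (ω ^ 2 + 1) * X + (ω ^ 2 + ω) * Y = 0) : X = 0 := by
  have hd : (ω + 1) * X = 0 := by
    linear_combination ω * h0 + (ω ^ 2 + ω + 1) * h1 + h2 +
      (-ω * X - ω * Z - 2 * X - Y - 2 * Z) * hω +
      (-2 * ω ^ 2 * X - ω ^ 2 * Y - 2 * ω ^ 2 * Z - 2 * ω * X - 2 * ω * Y - 2 * ω * Z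
        - X - Y - 2 * Z) * h2c
  have hinv : (ω + 1) * (ω ^ 2 + ω) = 1 := by
    linear_combination hω + (ω ^ 2 + ω) * h2c
  calc X = (ω ^ 2 + ω) * ((ω + 1) * X) := by
            rw [← mul_assoc, mul_comm (ω ^ 2 + ω), hinv, one_mul]
    _ = 0 := by rw [hd, mul_zero]

lemma aux_case0c (ω X Y Z : F) (h2c : (2 : F) = 0) (hω : ω ^ 3 = ω + 1)
    (h0 : X + (ω ^ 2 + ω + 1) * Y + ω * Z = 0)
    (h1 : Y + (ω ^ 2 + ω + 1) * Z + ω * X = 0)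
    (h2 : Z + (ω ^ 2 + ω + 1) * X + ω * Y = 0) : X = 0 := by
  have hd : (ω ^ 2 + 1) * X = 0 := by
    linear_combination ω ^ 2 * h0 + (ω + 1) * h1 + h2 +
      (-ω * Y - Y - 2 * Z) * hω +
      (-ω ^ 2 * X - ω ^ 2 * Y - ω ^ 2 * Z - ω * X - 2 * ω * Y - 2 * ω * Z - Y - 2 * Z) * h2c
  have hinv : (ω ^ 2 + 1) * ω = 1 := by
    linear_combination hω + ω * h2c
  calc X = ω * ((ω ^ 2 + 1) * X) := by
            rw [← mul_assoc, mul_comm ω, hinv, one_mul]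
    _ = 0 := by rw [hd, mul_zero]

lemma aux_caseE2 (ω X Y Z : F) (h2c : (2 : F) = 0) (hω : ω ^ 3 = ω + 1)
    (h0 : X + (ω + 1) * Y + ω ^ 2 * Z = 0)
    (h1 : Y + (ω ^ 2 + ω + 1) * Z + ω * X = 0)
    (h2 : Z + (ω ^ 2 + 1) * X + (ω ^ 2 + ω) * Y = 0) : X = 0 := by
  linear_combination (ω ^ 2 + 1) * h0 + (ω ^ 2 + ω) * h1 + (ω ^ 2 + ω) * h2 +
    (-ω * X - ω * Y - 2 * ω * Z - 2 * X - 3 * Y - 2 * Z) * hω +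
    (-2 * ω ^ 2 * X - 2 * ω ^ 2 * Y - 3 * ω ^ 2 * Z - 2 * ω * X - 3 * ω * Y - 3 * ω * Z
      - X - 2 * Y - Z) * h2c

end Aux

set_option maxHeartbeats 1600000 in
/-- Let `m` be a positive integer with `m ≢ 1 (mod 3)` and `F = 𝔽_{2^(3m)}`. Then for every
`ε ∈ F`, `ε ≠ 0`, one has `ε^(1+2^m+2^(2m)) + Tr₃(ε³ + ε^(2+2^m)) ≠ 0`, where
`Tr₃(x) = x + x^(2^m) + x^(2^(2m))`. -/
theorem norm_add_trace_ne_zero_of_mod_three_ne_one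
    (m : ℕ) (hm : 0 < m) (hm3 : m % 3 ≠ 1)
    (Tr₃ : GaloisField 2 (3 * m) → GaloisField 2 (3 * m))
    (hTr : ∀ x, Tr₃ x = x + x ^ 2 ^ m + x ^ 2 ^ (2 * m)) :
    ∀ ε : GaloisField 2 (3 * m), ε ≠ 0 →
      ε ^ (1 + 2 ^ m + 2 ^ (2 * m)) + Tr₃ (ε ^ 3 + ε ^ (2 + 2 ^ m)) ≠ 0 := by
  intro ε hε hS
  haveI : Fintype (GaloisField 2 (3 * m)) := Fintype.ofFinite _
  haveI : DecidableEq (GaloisField 2 (3 * m)) := Classical.decEq _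
  have h2c : (2 : GaloisField 2 (3 * m)) = 0 := by
    have h := CharP.cast_eq_zero (GaloisField 2 (3 * m)) 2
    exact_mod_cast h
  have hcard : Fintype.card (GaloisField 2 (3 * m)) = 2 ^ (3 * m) := by
    have h := GaloisField.card 2 (3 * m) (by positivity)
    rwa [Nat.card_eq_fintype_card] at h
  have hq3 : ∀ x : GaloisField 2 (3 * m), x ^ 2 ^ (3 * m) = x := by
    intro x
    rw [← hcard, FiniteField.pow_card]
  have hQ0 : (2 : ℕ) ^ m ≠ 0 := by positivity
  have hadd : ∀ x y : GaloisField 2 (3 * m), (x + y) ^ 2 ^ m = x ^ 2 ^ m + y ^ 2 ^ m := by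
    intro x y; exact add_pow_char_pow x y 2 m
  have hadd2 : ∀ x y : GaloisField 2 (3 * m),
      (x + y) ^ 2 ^ (2 * m) = x ^ 2 ^ (2 * m) + y ^ 2 ^ (2 * m) := by
    intro x y; exact add_pow_char_pow x y 2 (2*m)
  -- obtain a root ω of X³ + X + 1
  haveI : Fact (Nat.Prime 7) := ⟨by norm_num⟩
  have h7 : (7 : ℕ) ∣ Fintype.card (GaloisField 2 (3 * m))ˣ := by
    rw [Fintype.card_units, hcard]
    have h8 : (7 : ℕ) ∣ 8 ^ m - 1 := by
      simpa using Nat.sub_dvd_pow_sub_pow 8 1 m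
    have he : (2 : ℕ) ^ (3 * m) = 8 ^ m := by
      rw [pow_mul]; norm_num
    rw [he]; exact h8
  obtain ⟨ζ, hζ⟩ := exists_prime_orderOf_dvd_card 7 h7
  obtain ⟨ω, hω⟩ : ∃ ω : GaloisField 2 (3 * m), ω ^ 3 = ω + 1 := by
    have hzpow : ζ ^ 7 = 1 := by rw [← hζ]; exact pow_orderOf_eq_one ζ
    have hz7 : ((ζ : (GaloisField 2 (3 * m))ˣ) : GaloisField 2 (3 * m)) ^ 7 = 1 := by
      rw [← Units.val_pow_eq_pow_val, hzpow, Units.val_one]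
    have hz1 : ((ζ : (GaloisField 2 (3 * m))ˣ) : GaloisField 2 (3 * m)) ≠ 1 := by
      intro h
      have hu : (ζ : (GaloisField 2 (3 * m))ˣ) = 1 := Units.ext h
      rw [hu] at hζ
      simp at hζ
    set z := ((ζ : (GaloisField 2 (3 * m))ˣ) : GaloisField 2 (3 * m)) with hz
    have hsplit : (z + 1) * ((z ^ 3 + z + 1) * (z ^ 3 + z ^ 2 + 1)) = 0 := by
      linear_combination hz7 + (z ^ 6 + z ^ 5 + 2 * z ^ 4 + 2 * z ^ 3 + z ^ 2 + z + 1) * h2c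
    rcases mul_eq_zero.mp hsplit with h | h
    · exact absurd (by linear_combination h - h2c) hz1
    rcases mul_eq_zero.mp h with h | h
    · exact ⟨z, by linear_combination h + (-z - 1) * h2c⟩
    · exact ⟨z ^ 6, by
        linear_combination (z ^ 11 + z ^ 4) * hz7 + (-z ^ 3 + z ^ 2 + 1) * h +
          (-z ^ 2 - 1) * h2c⟩
  have hω7 : ω ^ 7 = 1 := by
    linear_combination (ω ^ 4 + ω ^ 2 + ω + 1) * hω + (ω ^ 2 + ω) * h2c
  have hpow7 : ∀ k : ℕ, ω ^ k = ω ^ (k % 7) := by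
    intro k
    conv_lhs => rw [← Nat.div_add_mod k 7]
    rw [pow_add, pow_mul, hω7, one_pow, one_mul]
  -- powers of ε
  set B := ε ^ 2 ^ m with hB
  set C := ε ^ 2 ^ (2 * m) with hC
  have hεB : ε ^ 2 ^ m = B := hB.symm
  have hBC : B ^ 2 ^ m = C := by
    rw [hB, ← pow_mul]
    have he : (2 : ℕ) ^ m * 2 ^ m = 2 ^ (2 * m) := by
      rw [← pow_add]; congr 1; omega
    rw [he, hC]
  have hCA : C ^ 2 ^ m = ε := by
    rw [hC, ← pow_mul]
    have he : (2 : ℕ) ^ (2 * m) * 2 ^ m = 2 ^ (3 * m) := by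
      rw [← pow_add]; congr 1; omega
    rw [he]; exact hq3 ε
  have hB2 : B ^ 2 ^ (2 * m) = ε := by
    rw [hB, ← pow_mul]
    have he : (2 : ℕ) ^ m * 2 ^ (2 * m) = 2 ^ (3 * m) := by
      rw [← pow_add]; congr 1; omega
    rw [he]; exact hq3 ε
  -- rewrite the hypothesis into polynomial form
  rw [hTr] at hS
  have e2 : ε ^ (2 + 2 ^ m) = ε ^ 2 * B := by rw [pow_add, hB]
  rw [e2] at hS
  have e1 : ε ^ (1 + 2 ^ m + 2 ^ (2 * m)) = ε * B * C := by
    rw [pow_add, pow_add, pow_one, hB, hC]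
  rw [e1] at hS
  have e3 : (ε ^ 3 + ε ^ 2 * B) ^ 2 ^ m = B ^ 3 + B ^ 2 * C := by
    rw [hadd, mul_pow, pow_right_comm ε 3, pow_right_comm ε 2, hεB, hBC]
  have e4 : (ε ^ 3 + ε ^ 2 * B) ^ 2 ^ (2 * m) = C ^ 3 + C ^ 2 * ε := by
    rw [hadd2, mul_pow, pow_right_comm ε 3, pow_right_comm ε 2, ← hC, hB2]
  rw [e3, e4] at hS
  have hS' : ε * B * C + (ε ^ 3 + ε ^ 2 * B) + (B ^ 3 + B ^ 2 * C) + (C ^ 3 + C ^ 2 * ε) = 0 := by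
    linear_combination hS
  -- factorization over F₈
  have hfac : (ε + (ω + 1) * B + ω ^ 2 * C) *
      ((ε + (ω ^ 2 + 1) * B + (ω ^ 2 + ω) * C) * (ε + (ω ^ 2 + ω + 1) * B + ω * C)) = 0 := by
    linear_combination hS' +
      (ω ^ 3 * B ^ 2 * C + ω ^ 3 * B * C ^ 2 + ω ^ 2 * B ^ 3 + 2 * ω ^ 2 * B ^ 2 * C +
        3 * ω ^ 2 * B * C ^ 2 + ω ^ 2 * C ^ 3 + ω * ε * B ^ 2 + 3 * ω * ε * B * C +
        ω * ε * C ^ 2 + 2 * ω * B ^ 3 + 7 * ω * B ^ 2 * C + 4 * ω * B * C ^ 2 + ω * C ^ 3 +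
        3 * ε * B ^ 2 + 5 * ε * B * C + 3 * ε * C ^ 2 + 4 * B ^ 3 + 9 * B ^ 2 * C +
        8 * B * C ^ 2 + C ^ 3) * hω +
      (ω ^ 2 * ε ^ 2 * B + ω ^ 2 * ε ^ 2 * C + 3 * ω ^ 2 * ε * B ^ 2 +
        5 * ω ^ 2 * ε * B * C + ω ^ 2 * ε * C ^ 2 + 3 * ω ^ 2 * B ^ 3 +
        7 * ω ^ 2 * B ^ 2 * C + 4 * ω ^ 2 * B * C ^ 2 + ω ^ 2 * C ^ 3 + ω * ε ^ 2 * B +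
        ω * ε ^ 2 * C + 4 * ω * ε * B ^ 2 + 6 * ω * ε * B * C + 2 * ω * ε * C ^ 2 +
        4 * ω * B ^ 3 + 9 * ω * B ^ 2 * C + 6 * ω * B * C ^ 2 + ω * C ^ 3 + ε ^ 2 * B +
        3 * ε * B ^ 2 + 2 * ε * B * C + ε * C ^ 2 + 2 * B ^ 3 + 4 * B ^ 2 * C +
        4 * B * C ^ 2) * h2c
  -- Frobenius action on ω
  have h2m : 2 ^ m % 7 = 2 ^ (m % 3) % 7 := by
    conv_lhs => rw [show m = 3 * (m / 3) + m % 3 by omega]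
    rw [pow_add, pow_mul, Nat.mul_mod, Nat.pow_mod]
    norm_num [Nat.mod_mod_of_dvd]
  have hωQ : ω ^ 2 ^ m = ω ^ (2 ^ (m % 3) % 7) := by
    rw [hpow7 (2 ^ m), h2m]
  have hmod : m % 3 = 0 ∨ m % 3 = 2 := by omega
  have hBne : B ≠ 0 := by rw [hB]; exact pow_ne_zero _ hε
  have hCne : C ≠ 0 := by rw [hC]; exact pow_ne_zero _ hε
  rcases hmod with hmod | hmod
  · -- m ≡ 0 (mod 3) : Frobenius fixes F₈
    have hωQ0 : ω ^ 2 ^ m = ω := by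
      rw [hωQ, hmod]; norm_num
    have c1 : (ω + 1) ^ 2 ^ m = ω + 1 := by rw [hadd, hωQ0, one_pow]
    have c2 : (ω ^ 2) ^ 2 ^ m = ω ^ 2 := by rw [pow_right_comm, hωQ0]
    have c3 : (ω ^ 2 + 1) ^ 2 ^ m = ω ^ 2 + 1 := by
      rw [hadd, pow_right_comm, hωQ0, one_pow]
    have c4 : (ω ^ 2 + ω) ^ 2 ^ m = ω ^ 2 + ω := by
      rw [hadd, pow_right_comm, hωQ0]
    have c5 : (ω ^ 2 + ω + 1) ^ 2 ^ m = ω ^ 2 + ω + 1 := by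
      rw [hadd, hadd, pow_right_comm, hωQ0, one_pow]
    have c6 : ω ^ 2 ^ m = ω := hωQ0
    rcases mul_eq_zero.mp hfac with hf | hf'
    · have g1 := aux_frobStep _ hQ0 hadd c1 c2 hεB hBC hCA hf
      have g2 := aux_frobStep _ hQ0 hadd c1 c2 hBC hCA hεB g1
      exact hε (aux_case0a ω ε B C h2c hω hf g1 g2)
    rcases mul_eq_zero.mp hf' with hf | hf
    · have g1 := aux_frobStep _ hQ0 hadd c3 c4 hεB hBC hCA hf
      have g2 := aux_frobStep _ hQ0 hadd c3 c4 hBC hCA hεB g1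
      exact hε (aux_case0b ω ε B C h2c hω hf g1 g2)
    · have g1 := aux_frobStep _ hQ0 hadd c5 c6 hεB hBC hCA hf
      have g2 := aux_frobStep _ hQ0 hadd c5 c6 hBC hCA hεB g1
      exact hε (aux_case0c ω ε B C h2c hω hf g1 g2)
  · -- m ≡ 2 (mod 3) : Frobenius acts as x ↦ x⁴ on F₈
    have hωQ4 : ω ^ 2 ^ m = ω ^ 4 := by
      rw [hωQ, hmod]; norm_num
    have c1 : (ω + 1) ^ 2 ^ m = ω ^ 2 + ω + 1 := by
      rw [hadd, hωQ4, one_pow]; linear_combination ω * hω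
    have c2 : (ω ^ 2) ^ 2 ^ m = ω := by
      rw [pow_right_comm, hωQ4]
      linear_combination (ω ^ 5 + ω ^ 3 + ω ^ 2 + ω + 2) * hω + (ω ^ 2 + ω + 1) * h2c
    have c3 : (ω ^ 2 + 1) ^ 2 ^ m = ω + 1 := by
      rw [hadd, pow_right_comm, hωQ4, one_pow]
      linear_combination (ω ^ 5 + ω ^ 3 + ω ^ 2 + ω + 2) * hω + (ω ^ 2 + ω + 1) * h2c
    have c4 : (ω ^ 2 + ω) ^ 2 ^ m = ω ^ 2 := by
      rw [hadd, pow_right_comm, hωQ4]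
      linear_combination (ω ^ 5 + ω ^ 3 + ω ^ 2 + 2 * ω + 2) * hω + (ω ^ 2 + 2 * ω + 1) * h2c
    have c5 : (ω ^ 2 + ω + 1) ^ 2 ^ m = ω ^ 2 + 1 := by
      rw [hadd, hadd, pow_right_comm, hωQ4, one_pow]
      linear_combination (ω ^ 5 + ω ^ 3 + ω ^ 2 + 2 * ω + 2) * hω + (ω ^ 2 + 2 * ω + 1) * h2c
    have c6 : ω ^ 2 ^ m = ω ^ 2 + ω := by
      rw [hωQ4]; linear_combination ω * hω
    rcases mul_eq_zero.mp hfac with hf | hf'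
    · have g1 := aux_frobStep _ hQ0 hadd c1 c2 hεB hBC hCA hf
      have g2 := aux_frobStep _ hQ0 hadd c5 c6 hBC hCA hεB g1
      exact hε (aux_caseE2 ω ε B C h2c hω hf g1 g2)
    rcases mul_eq_zero.mp hf' with hf | hf
    · have g1 := aux_frobStep _ hQ0 hadd c3 c4 hεB hBC hCA hf
      have g2 := aux_frobStep _ hQ0 hadd c1 c2 hBC hCA hεB g1
      exact hBne (aux_caseE2 ω B C ε h2c hω g1 g2 hf)
    · have g1 := aux_frobStep _ hQ0 hadd c5 c6 hεB hBC hCA hf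
      have g2 := aux_frobStep _ hQ0 hadd c3 c4 hBC hCA hεB g1
      exact hCne (aux_caseE2 ω C ε B h2c hω g2 hf g1)
end

section
/- Let n be a positive integer, F = 𝔽_{2^n}, R = W₂(F) the ring of length-2 2-typical truncated Witt vectors over F, and let f : F → F be a pseudo-planar function with f(0) = 0. Then for every g ∈ R, the number of ordered pairs (x,y) ∈ S₁ × S₁ with x − y = g equals: 2^n − 1 if g = 0; 1 if g ∈ S₄ ∪ S₅; and 0 otherwise (i.e., if g ∈ S₁ ∪ S₂ ∪ S₃). -/
open scoped Classical

noncomputable section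

/-- The Galois ring `GR(4,n)`, realized as length-2 2-typical truncated Witt vectors
over `F = 𝔽_{2^n}`. -/
abbrev GR (n : ℕ) : Type := TruncatedWittVector 2 2 (GaloisField 2 n)

/-- The truncated Teichmüller lift `τ : F → W₂(F)`. -/
def teich (n : ℕ) (x : GaloisField 2 n) : GR n :=
  WittVector.truncate 2 (WittVector.teichmuller 2 x)

/-- The lifted set `D_f = {τ(x) + 2·τ(f(x)^(2^(n-1))) : x ∈ F} ⊆ GR(4,n)`. -/
def Dset (n : ℕ) (f : GaloisField 2 n → GaloisField 2 n) : Set (GR n) :=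
  {g | ∃ x : GaloisField 2 n, g = teich n x + 2 * teich n (f x ^ 2 ^ (n - 1))}

/-- `S₁ = D_f \ {0}`. -/
def S1 (n : ℕ) (f : GaloisField 2 n → GaloisField 2 n) : Set (GR n) :=
  Dset n f \ {0}

/-- `S₂ = {−s : s ∈ S₁}`. -/
def S2 (n : ℕ) (f : GaloisField 2 n → GaloisField 2 n) : Set (GR n) :=
  (fun s => -s) '' S1 n f

/-- `S₃ = 2R \ {0}`. -/
def S3 (n : ℕ) : Set (GR n) :=
  {g | ∃ x : GR n, g = 2 * x} \ {0}

/-- `S₄`: the elements outside `S₀ ∪ S₁ ∪ S₂ ∪ S₃` appearing in the multiset `D_f²`. -/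
def S4 (n : ℕ) (f : GaloisField 2 n → GaloisField 2 n) : Set (GR n) :=
  {g | g ∉ ({0} : Set (GR n)) ∪ S1 n f ∪ S2 n f ∪ S3 n ∧
    ∃ x ∈ Dset n f, ∃ y ∈ Dset n f, g = x + y}

/-- `S₅`: the remaining elements. -/
def S5 (n : ℕ) (f : GaloisField 2 n → GaloisField 2 n) : Set (GR n) :=
  {g | g ∉ ({0} : Set (GR n)) ∪ S1 n f ∪ S2 n f ∪ S3 n ∪ S4 n f}


section Aux
open MvPolynomial WittVector Finset

theorem wittAdd_one' : wittAdd 2 1 =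
    X (0,1) + X (1,1) - X (0,0) * X (1,0) := by
  have hinj : Function.Injective (map (Int.castRingHom ℚ) :
      MvPolynomial (Fin 2 × ℕ) ℤ → MvPolynomial (Fin 2 × ℕ) ℚ) :=
    map_injective _ Int.cast_injective
  apply hinj
  have h0 : wittStructureRat 2 (map (Int.castRingHom ℚ) (X 0 + X 1 : MvPolynomial (Fin 2) ℤ)) 0
      = X (0,0) + X (1,0) := by
    rw [← map_wittStructureInt]
    have : wittStructureInt 2 (X 0 + X 1 : MvPolynomial (Fin 2) ℤ) 0 = wittAdd 2 0 := rfl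
    rw [this, wittAdd_zero]
    simp
  rw [show wittAdd 2 1 = wittStructureInt 2 (X 0 + X 1 : MvPolynomial (Fin 2) ℤ) 1 from rfl,
    map_wittStructureInt, wittStructureRat_rec, Finset.sum_range_one, h0]
  simp only [map_add, bind₁_X_right, wittPolynomial_one, wittPolynomial_zero,
    map_mul, map_pow, rename_X, pow_zero, pow_one, map_sub, rename_C, map_natCast, map_X]
  rw [C_1, one_mul]
  apply mul_left_cancel₀ (a := (C (2:ℚ) : MvPolynomial (Fin 2 × ℕ) ℚ)) (by simp)
  rw [← mul_assoc, ← C_mul]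
  norm_num
  rw [show (C (2:ℚ) : MvPolynomial (Fin 2 × ℕ) ℚ) = 2 from map_ofNat C 2]
  ring


variable {R : Type*} [CommRing R]

theorem add_coeff_one' (x y : WittVector 2 R) :
    (x + y).coeff 1 = x.coeff 1 + y.coeff 1 - x.coeff 0 * y.coeff 0 := by
  rw [WittVector.add_coeff, wittAdd_one']
  simp [WittVector.peval, Function.uncurry]

theorem tadd_coeff_zero (a b : TruncatedWittVector 2 2 R) :
    (a + b).coeff 0 = a.coeff 0 + b.coeff 0 := by
  obtain ⟨x, rfl⟩ := WittVector.truncate_surjective (p := 2) (R := R) 2 a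
  obtain ⟨y, rfl⟩ := WittVector.truncate_surjective (p := 2) (R := R) 2 b
  rw [← map_add]
  simp only [WittVector.coeff_truncate, Fin.val_zero]
  exact WittVector.add_coeff_zero x y

theorem tadd_coeff_one (a b : TruncatedWittVector 2 2 R) :
    (a + b).coeff 1 = a.coeff 1 + b.coeff 1 - a.coeff 0 * b.coeff 0 := by
  obtain ⟨x, rfl⟩ := WittVector.truncate_surjective (p := 2) (R := R) 2 a
  obtain ⟨y, rfl⟩ := WittVector.truncate_surjective (p := 2) (R := R) 2 b
  rw [← map_add]
  simp only [WittVector.coeff_truncate, Fin.val_zero, Fin.val_one]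
  exact add_coeff_one' x y

theorem tsub_coeff_zero (a b : TruncatedWittVector 2 2 R) :
    (a - b).coeff 0 = a.coeff 0 - b.coeff 0 := by
  have h := tadd_coeff_zero (a - b) b
  rw [sub_add_cancel] at h
  linear_combination -h

theorem tsub_coeff_one (a b : TruncatedWittVector 2 2 R) :
    (a - b).coeff 1 = a.coeff 1 - b.coeff 1 + (a.coeff 0 - b.coeff 0) * b.coeff 0 := by
  have h := tadd_coeff_one (a - b) b
  rw [sub_add_cancel] at h
  have hz := tsub_coeff_zero a b
  linear_combination -h + b.coeff 0 * hz

theorem text {n : ℕ} {a b : GR n} (h0 : a.coeff 0 = b.coeff 0)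
    (h1 : a.coeff 1 = b.coeff 1) : a = b := by
  apply TruncatedWittVector.ext
  intro i
  fin_cases i
  · exact h0
  · exact h1

theorem teich_coeff_zero (n : ℕ) (x : GaloisField 2 n) : (teich n x).coeff 0 = x := by
  rw [teich, WittVector.coeff_truncate]
  exact WittVector.teichmuller_coeff_zero 2 x

theorem teich_coeff_one (n : ℕ) (x : GaloisField 2 n) : (teich n x).coeff 1 = 0 := by
  rw [teich, WittVector.coeff_truncate]
  exact WittVector.teichmuller_coeff_pos 2 x 1 one_pos

theorem teich_zero (n : ℕ) : teich n 0 = 0 := by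
  rw [teich, WittVector.teichmuller_zero, map_zero]

theorem two_mul_coeff_zero {n : ℕ} (x : GR n) : (2 * x).coeff 0 = 0 := by
  rw [two_mul, tadd_coeff_zero]
  exact CharTwo.add_self_eq_zero _

theorem two_teich_coeff_one (n : ℕ) (v : GaloisField 2 n) :
    (2 * teich n v).coeff 1 = v ^ 2 := by
  rw [two_mul, tadd_coeff_one, teich_coeff_one, teich_coeff_zero]
  ring_nf
  rw [CharTwo.neg_eq]

section dd

variable (n : ℕ) (f : GaloisField 2 n → GaloisField 2 n)

/-- The lifting map `x ↦ τ(x) + 2τ(√f(x))`. -/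
def dd (x : GaloisField 2 n) : GR n :=
  teich n x + 2 * teich n (f x ^ 2 ^ (n - 1))

theorem Dset_eq_range : Dset n f = Set.range (dd n f) := by
  ext g
  constructor
  · rintro ⟨x, rfl⟩; exact ⟨x, rfl⟩
  · rintro ⟨x, rfl⟩; exact ⟨x, rfl⟩

variable {n}

theorem sqrt_sq (hn : 0 < n) (a : GaloisField 2 n) : (a ^ 2 ^ (n - 1)) ^ 2 = a := by
  letI : Fintype (GaloisField 2 n) := Fintype.ofFinite _
  have hcard : Fintype.card (GaloisField 2 n) = 2 ^ n := by
    rw [← Nat.card_eq_fintype_card]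
    exact GaloisField.card 2 n hn.ne'
  rw [← pow_mul]
  have : 2 ^ (n - 1) * 2 = 2 ^ n := by
    rw [← pow_succ, Nat.sub_add_cancel hn]
  rw [this, ← hcard, FiniteField.pow_card]

theorem dd_coeff_zero (x : GaloisField 2 n) : (dd n f x).coeff 0 = x := by
  rw [dd, tadd_coeff_zero, teich_coeff_zero, two_mul_coeff_zero, add_zero]

theorem dd_coeff_one (hn : 0 < n) (x : GaloisField 2 n) : (dd n f x).coeff 1 = f x := by
  rw [dd, tadd_coeff_one, teich_coeff_one, two_teich_coeff_one, two_mul_coeff_zero,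
    mul_zero, sub_zero, zero_add, sqrt_sq hn]

theorem dd_inj : Function.Injective (dd n f) := by
  intro x y h
  have := congrArg (TruncatedWittVector.coeff 0) h
  rwa [dd_coeff_zero, dd_coeff_zero] at this

theorem dd_zero (hf0 : f 0 = 0) : dd n f 0 = 0 := by
  rw [dd, hf0, zero_pow (by positivity), teich_zero, mul_zero, add_zero]

theorem dd_sub_coeff_zero (x y : GaloisField 2 n) :
    (dd n f x - dd n f y).coeff 0 = x + y := by
  rw [tsub_coeff_zero, dd_coeff_zero, dd_coeff_zero, CharTwo.sub_eq_add]

theorem dd_sub_coeff_one (hn : 0 < n) (x y : GaloisField 2 n) :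
    (dd n f x - dd n f y).coeff 1 = f x + f y + (x + y) * y := by
  rw [tsub_coeff_one, dd_coeff_one f hn, dd_coeff_one f hn, dd_coeff_zero, dd_coeff_zero,
    CharTwo.sub_eq_add, CharTwo.sub_eq_add]

/-- Main coordinate characterization of `dd x - dd y = g`. -/
theorem dd_sub_eq_iff (hn : 0 < n) (x y : GaloisField 2 n) (g : GR n) :
    dd n f x - dd n f y = g ↔
      x = y + g.coeff 0 ∧ f (y + g.coeff 0) + f y + g.coeff 0 * y = g.coeff 1 := by
  have hyy : y + y = 0 := CharTwo.add_self_eq_zero y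
  constructor
  · intro h
    have h0 : x + y = g.coeff 0 := by rw [← h, dd_sub_coeff_zero]
    have hx : x = y + g.coeff 0 := by linear_combination h0 - hyy
    refine ⟨hx, ?_⟩
    have h1 : f x + f y + (x + y) * y = g.coeff 1 := by rw [← h, dd_sub_coeff_one f hn]
    rw [← hx, ← h0]
    exact h1
  · rintro ⟨rfl, h1⟩
    have hc : y + g.coeff 0 + y = g.coeff 0 := by linear_combination hyy
    apply text
    · rw [dd_sub_coeff_zero, hc]
    · rw [dd_sub_coeff_one f hn, hc]
      exact h1

end dd

open scoped Classical in
theorem mem_S45_iff (n : ℕ) (f : GaloisField 2 n → GaloisField 2 n) (g : GR n) :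
    g ∈ S4 n f ∪ S5 n f ↔ g ∉ ({0} : Set (GR n)) ∪ S1 n f ∪ S2 n f ∪ S3 n := by
  constructor
  · rintro (h | h)
    · exact h.1
    · intro hg
      exact h (by simp only [Set.mem_union] at hg ⊢; tauto)
  · intro h
    by_cases h4 : g ∈ S4 n f
    · exact Or.inl h4
    · refine Or.inr ?_
      intro hg
      simp only [Set.mem_union] at hg h
      rcases hg with (hg | hg)
      · exact h hg
      · exact h4 hg

theorem mem_S1_iff (n : ℕ) (f : GaloisField 2 n → GaloisField 2 n) (hf0 : f 0 = 0) (g : GR n) :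
    g ∈ S1 n f ↔ ∃ x : GaloisField 2 n, x ≠ 0 ∧ g = dd n f x := by
  constructor
  · rintro ⟨⟨x, rfl⟩, hne⟩
    refine ⟨x, fun hx => ?_, rfl⟩
    subst hx
    exact hne (dd_zero f hf0)
  · rintro ⟨x, hx, rfl⟩
    refine ⟨⟨x, rfl⟩, ?_⟩
    intro h
    simp only [Set.mem_singleton_iff] at h
    exact hx (dd_inj f (h.trans (dd_zero f hf0).symm))

theorem key_unique {n : ℕ} (f : GaloisField 2 n → GaloisField 2 n) (hn : 0 < n)
    (hpp : ∀ ε : GaloisField 2 n, ε ≠ 0 →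
      Function.Bijective (fun x => f (x + ε) + f x + ε * x))
    (g : GR n) (hg : g.coeff 0 ≠ 0) :
    ∃! q : GaloisField 2 n × GaloisField 2 n, dd n f q.1 - dd n f q.2 = g := by
  obtain ⟨y0, hy0, hyu⟩ := (hpp (g.coeff 0) hg).existsUnique (g.coeff 1)
  refine ⟨(y0 + g.coeff 0, y0), ?_, ?_⟩
  · show dd n f (y0 + g.coeff 0) - dd n f y0 = g
    rw [dd_sub_eq_iff f hn]
    exact ⟨rfl, hy0⟩
  · rintro ⟨x, y⟩ h
    rw [dd_sub_eq_iff f hn] at h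
    obtain ⟨hx, h1⟩ := h
    have hy : y = y0 := hyu y h1
    subst hy
    rw [Prod.mk.injEq]
    exact ⟨hx, rfl⟩

theorem card_ne_zero (n : ℕ) (hn : 0 < n) :
    Nat.card {x : GaloisField 2 n // x ≠ 0} = 2 ^ n - 1 := by
  classical
  letI : Fintype (GaloisField 2 n) := Fintype.ofFinite _
  have hcard : Fintype.card (GaloisField 2 n) = 2 ^ n := by
    rw [← Nat.card_eq_fintype_card]
    exact GaloisField.card 2 n hn.ne'
  rw [Nat.card_eq_fintype_card]
  have : Fintype.card {x : GaloisField 2 n // ¬ x = 0} =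
      Fintype.card (GaloisField 2 n) - Fintype.card {x : GaloisField 2 n // x = 0} :=
    Fintype.card_subtype_compl _
  simp only [Ne]
  rw [this, hcard, Fintype.card_subtype_eq]

end Aux


/-- **Lemma (differences of `S₁`).** For a pseudo-planar function `f` on `F = 𝔽_{2^n}` with
`f(0) = 0`, the multiset `S₁S₁⁻¹` of differences of `S₁ = D_f \ {0}` in the Galois ring
`R = W₂(F)` consists of `0` with multiplicity `2^n − 1`, the elements of `S₄ ∪ S₅` with
multiplicity one, and contains no element of `S₁ ∪ S₂ ∪ S₃`. -/
theorem S1_differences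
    (n : ℕ) (hn : 0 < n)
    (f : GaloisField 2 n → GaloisField 2 n)
    (hpp : ∀ ε : GaloisField 2 n, ε ≠ 0 →
      Function.Bijective (fun x => f (x + ε) + f x + ε * x))
    (hf0 : f 0 = 0) (g : GR n) :
    Nat.card {p : GR n × GR n // p.1 ∈ S1 n f ∧ p.2 ∈ S1 n f ∧ p.1 - p.2 = g} =
      if g = 0 then 2 ^ n - 1
      else if g ∈ S4 n f ∪ S5 n f then 1
      else 0 := by
  classical
  by_cases hg0 : g = 0
  · subst hg0
    rw [if_pos rfl]
    let φ : {x : GaloisField 2 n // x ≠ 0} →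
        {p : GR n × GR n // p.1 ∈ S1 n f ∧ p.2 ∈ S1 n f ∧ p.1 - p.2 = 0} :=
      fun x => ⟨(dd n f x.1, dd n f x.1),
        (mem_S1_iff n f hf0 _).2 ⟨x.1, x.2, rfl⟩,
        (mem_S1_iff n f hf0 _).2 ⟨x.1, x.2, rfl⟩, sub_self _⟩
    have hb : Function.Bijective φ := by
      constructor
      · intro x y h
        have : dd n f x.1 = dd n f y.1 := congrArg (fun p => (p.1 : GR n × GR n).1) h
        exact Subtype.ext (dd_inj f this)
      · rintro ⟨⟨a, b⟩, h1, h2, h3⟩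
        obtain ⟨x, hx, rfl⟩ := (mem_S1_iff n f hf0 a).1 h1
        have hab : dd n f x = b := by rwa [sub_eq_zero] at h3
        exact ⟨⟨x, hx⟩, Subtype.ext (Prod.ext rfl hab)⟩
    rw [← Nat.card_congr (Equiv.ofBijective φ hb)]
    exact card_ne_zero n hn
  · rw [if_neg hg0]
    by_cases hc : g.coeff 0 = 0
    · -- g ∈ S3
      have hgS3 : g ∈ S3 n := by
        refine ⟨⟨teich n (g.coeff 1 ^ 2 ^ (n - 1)), ?_⟩, by simpa using hg0⟩
        refine text (by rw [two_mul_coeff_zero, hc]) ?_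
        rw [two_teich_coeff_one, sqrt_sq hn]
      have h45 : g ∉ S4 n f ∪ S5 n f := by
        intro h
        exact (mem_S45_iff n f g).1 h (by simp only [Set.mem_union]; tauto)
      rw [if_neg h45]
      have : IsEmpty {p : GR n × GR n // p.1 ∈ S1 n f ∧ p.2 ∈ S1 n f ∧ p.1 - p.2 = g} := by
        refine ⟨fun p => ?_⟩
        obtain ⟨⟨a, b⟩, h1, h2, h3⟩ := p
        obtain ⟨x, hx, rfl⟩ := (mem_S1_iff n f hf0 _).1 h1
        obtain ⟨y, hy, rfl⟩ := (mem_S1_iff n f hf0 _).1 h2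
        have h0 := dd_sub_coeff_zero f x y
        rw [h3, hc] at h0
        have hxy : x = y := by
          have hyy : y + y = 0 := CharTwo.add_self_eq_zero y
          linear_combination -h0 - hyy
        rw [hxy, sub_self] at h3
        exact hg0 h3.symm
      exact Nat.card_of_isEmpty
    · obtain ⟨q, hq, hqu⟩ := key_unique f hn hpp g hc
      by_cases hy0 : q.2 = 0
      · -- g = dd q.1 ∈ S1
        have hgd : g = dd n f q.1 := by
          rw [← hq, hy0, dd_zero f hf0, sub_zero]
        have hx0 : q.1 ≠ 0 := by
          intro h
          rw [h, dd_zero f hf0] at hgd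
          exact hg0 hgd
        have hS1 : g ∈ S1 n f := (mem_S1_iff n f hf0 g).2 ⟨q.1, hx0, hgd⟩
        have h45 : g ∉ S4 n f ∪ S5 n f := by
          intro h
          exact (mem_S45_iff n f g).1 h (by simp only [Set.mem_union]; tauto)
        rw [if_neg h45]
        have : IsEmpty {p : GR n × GR n // p.1 ∈ S1 n f ∧ p.2 ∈ S1 n f ∧ p.1 - p.2 = g} := by
          refine ⟨fun p => ?_⟩
          obtain ⟨⟨a, b⟩, h1, h2, h3⟩ := p
          obtain ⟨x, hx, rfl⟩ := (mem_S1_iff n f hf0 _).1 h1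
          obtain ⟨y, hy, rfl⟩ := (mem_S1_iff n f hf0 _).1 h2
          have := hqu (x, y) h3
          rw [← this] at hy0
          exact hy hy0
        exact Nat.card_of_isEmpty
      · by_cases hx0 : q.1 = 0
        · -- g = -dd q.2 ∈ S2
          have hgd : g = - dd n f q.2 := by
            rw [← hq, hx0, dd_zero f hf0, zero_sub]
          have hS2 : g ∈ S2 n f :=
            ⟨dd n f q.2, (mem_S1_iff n f hf0 _).2 ⟨q.2, hy0, rfl⟩, hgd.symm⟩
          have h45 : g ∉ S4 n f ∪ S5 n f := by
            intro h
            exact (mem_S45_iff n f g).1 h (by simp only [Set.mem_union]; tauto)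
          rw [if_neg h45]
          have : IsEmpty {p : GR n × GR n // p.1 ∈ S1 n f ∧ p.2 ∈ S1 n f ∧ p.1 - p.2 = g} := by
            refine ⟨fun p => ?_⟩
            obtain ⟨⟨a, b⟩, h1, h2, h3⟩ := p
            obtain ⟨x, hx, rfl⟩ := (mem_S1_iff n f hf0 _).1 h1
            obtain ⟨y, hy, rfl⟩ := (mem_S1_iff n f hf0 _).1 h2
            have := hqu (x, y) h3
            rw [← this] at hx0
            exact hx hx0
          exact Nat.card_of_isEmpty
        · -- count 1
          have h45 : g ∈ S4 n f ∪ S5 n f := by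
            rw [mem_S45_iff]
            intro h
            simp only [Set.mem_union, Set.mem_singleton_iff] at h
            rcases h with ((( h | h) | h) | h)
            · exact hg0 h
            · obtain ⟨x, hx, rfl⟩ := (mem_S1_iff n f hf0 _).1 h
              have : dd n f x - dd n f 0 = dd n f x := by
                rw [dd_zero f hf0, sub_zero]
              have := hqu (x, 0) this
              rw [← this] at hy0
              exact hy0 rfl
            · obtain ⟨s, hs, rfl⟩ := h
              obtain ⟨y, hy, rfl⟩ := (mem_S1_iff n f hf0 _).1 hs
              have : dd n f 0 - dd n f y = - dd n f y := by
                rw [dd_zero f hf0, zero_sub]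
              have := hqu (0, y) this
              rw [← this] at hx0
              exact hx0 rfl
            · obtain ⟨⟨x, rfl⟩, -⟩ := h
              exact hc (two_mul_coeff_zero x)
          rw [if_pos h45]
          rw [Nat.card_eq_one_iff_unique]
          constructor
          · constructor
            rintro ⟨⟨a, b⟩, h1, h2, h3⟩ ⟨⟨a', b'⟩, h1', h2', h3'⟩
            obtain ⟨x, hx, rfl⟩ := (mem_S1_iff n f hf0 _).1 h1
            obtain ⟨y, hy, rfl⟩ := (mem_S1_iff n f hf0 _).1 h2
            obtain ⟨x', hx', rfl⟩ := (mem_S1_iff n f hf0 _).1 h1'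
            obtain ⟨y', hy', rfl⟩ := (mem_S1_iff n f hf0 _).1 h2'
            have e1 := (hqu (x, y) h3).trans (hqu (x', y') h3').symm
            have ex : x = x' := congrArg Prod.fst e1
            have ey : y = y' := congrArg Prod.snd e1
            subst ex; subst ey
            rfl
          · exact ⟨⟨(dd n f q.1, dd n f q.2),
              (mem_S1_iff n f hf0 _).2 ⟨q.1, hx0, rfl⟩,
              (mem_S1_iff n f hf0 _).2 ⟨q.2, hy0, rfl⟩, hq⟩⟩
end
end
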